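/- arXiv:1805.02748 — 2 statements merged into one kernel-verified Lean document; each statement's English description precedes it below -/
import Mathlib

section
/- Let P be a well-founded tree and n, k < ω. For 0 < n, let E_n(P) = {(t_0,…,t_{n-1},t_n) : t_0 < … < t_{n-1} ≤ t_n, t_n ∈ Leaves(P)}, let E_0(P) = Leaves(P), let Λ_n(P) = {(t_0,…,t_{n-1}) : t_0 < … < t_{n-1} in P}, and let Λ_0(P) = {∅}. Then for any function f : E_n(P) → {0,…,k} there exist a subtree Q of P with rank(Q) = rank(P) and τ_Q = τ_P restricted to Q, and a function F : Λ_n(Q) → {0,…,k}, such that F(t_0,…,t_{n-1}) = f(t_0,…,t_{n-1},t_n) for every (t_0,…,t_{n-1},t_n) ∈ E_n(Q) (in the case n = 0, this says f is constant with value F(∅) on Leaves(Q)). -/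
open Ordinal Set

universe u

/-- The set of maximal elements ("leaves") of `P`. -/
def treeLeaves {α : Type u} [PartialOrder α] (P : Set α) : Set α :=
  {t ∈ P | ∀ s ∈ P, ¬ t < s}

/-- The derivative `P' = P \ Leaves P`. -/
def treeDeriv {α : Type u} [PartialOrder α] (P : Set α) : Set α :=
  P \ treeLeaves P

/-- The transfinite iterated derivative `P^ξ`. -/
noncomputable def derivIter {α : Type u} [PartialOrder α] (P : Set α) (ξ : Ordinal.{u}) :
    Set α :=
  Ordinal.limitRecOn ξ P (fun _ ih => treeDeriv ih)
    (fun o _ ih => ⋂ (ζ : Set.Iio o), ih ζ.1 ζ.2)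

/-- `P` is a tree: every ancestor set is well-ordered (a well-founded chain). -/
def IsTree {α : Type u} [PartialOrder α] (P : Set α) : Prop :=
  ∀ t ∈ P, IsChain (· ≤ ·) {s ∈ P | s ≤ t} ∧ {s ∈ P | s ≤ t}.WellFoundedOn (· < ·)

/-- `P` is well-founded: some transfinite derivative is empty. -/
def IsWFTree {α : Type u} [PartialOrder α] (P : Set α) : Prop :=
  ∃ ξ : Ordinal.{u}, derivIter P ξ = ∅

/-- The rank of a well-founded tree: the least `ξ` with `P^ξ = ∅`. -/
noncomputable def treeRank {α : Type u} [PartialOrder α] (P : Set α) : Ordinal.{u} :=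
  sInf {ξ | derivIter P ξ = ∅}

/-- `τ_P(t)`: the largest ordinal `ξ` with `t ∈ P^ξ`. -/
noncomputable def treeTau {α : Type u} [PartialOrder α] (P : Set α) (t : α) : Ordinal.{u} :=
  sSup {ξ | t ∈ derivIter P ξ}

/-- `τ_{P,β}(t)`: the largest ordinal `ξ` with `t ∈ P^{β·ξ}`. -/
noncomputable def treeTauMul {α : Type u} [PartialOrder α] (P : Set α) (β : Ordinal.{u})
    (t : α) : Ordinal.{u} :=
  sSup {ξ | t ∈ derivIter P (β * ξ)}

/-- `alpProd ε i = ω^{ω^{ε 0}} · ⋯ · ω^{ω^{ε i}}`. -/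
noncomputable def alpProd (ε : ℕ → Ordinal.{u}) : ℕ → Ordinal.{u}
  | 0 => omega0 ^ omega0 ^ ε 0
  | (i + 1) => alpProd ε i * omega0 ^ omega0 ^ ε (i + 1)

/-- The separation function `ς_P` of a tree whose rank has decomposition
`ω^{ω^{ε 0}} ⋯ ω^{ω^{ε l}}`: the least `i` such that `s, t` lie in the same block
`P^{α_i·δ} \ P^{α_i·(δ+1)}` for some ordinal `δ`. -/
noncomputable def sep {α : Type u} [PartialOrder α] (P : Set α) (ε : ℕ → Ordinal.{u})
    (s t : α) : ℕ :=
  sInf {i : ℕ | ∃ δ : Ordinal.{u},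
    s ∈ derivIter P (alpProd ε i * δ) \ derivIter P (alpProd ε i * (δ + 1)) ∧
    t ∈ derivIter P (alpProd ε i * δ) \ derivIter P (alpProd ε i * (δ + 1))}

/-- `indProd ε A l = ω^{ω^{ε 0}·1_A(0)} ⋯ ω^{ω^{ε l}·1_A(l)}`. -/
noncomputable def indProd (ε : ℕ → Ordinal.{u}) (A : Set ℕ) : ℕ → Ordinal.{u}
  | 0 => omega0 ^ (omega0 ^ ε 0 * A.indicator (fun _ => (1 : Ordinal.{u})) 0)
  | (i + 1) => indProd ε A i *
      omega0 ^ (omega0 ^ ε (i + 1) * A.indicator (fun _ => (1 : Ordinal.{u})) (i + 1))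

/-- `sumPow ε i = ω^{ε 0} + ⋯ + ω^{ε (i-1)}` (the partial sums `γ_i`). -/
noncomputable def sumPow (ε : ℕ → Ordinal.{u}) : ℕ → Ordinal.{u}
  | 0 => 0
  | (i + 1) => sumPow ε i + omega0 ^ ε i

/-- `indSum ε A i = Σ_{n < i} 1_A(n)·ω^{ε n}`. -/
noncomputable def indSum (ε : ℕ → Ordinal.{u}) (A : Set ℕ) : ℕ → Ordinal.{u}
  | 0 => 0
  | (i + 1) => indSum ε A i + A.indicator (fun _ => (1 : Ordinal.{u})) i * omega0 ^ ε i


section Aux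

variable {α : Type u} [PartialOrder α]

lemma derivIter_zero (P : Set α) : derivIter P 0 = P := by
  simp [derivIter]

lemma derivIter_succ (P : Set α) (ξ : Ordinal.{u}) :
    derivIter P (ξ + 1) = treeDeriv (derivIter P ξ) := by
  rw [derivIter, Ordinal.add_one_eq_succ, Ordinal.limitRecOn_succ]
  rfl

lemma derivIter_limit (P : Set α) {o : Ordinal.{u}} (ho : Order.IsSuccLimit o) :
    derivIter P o = ⋂ (ζ : Set.Iio o), derivIter P ζ.1 := by
  rw [derivIter, Ordinal.limitRecOn_limit (h := ho)]
  rfl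

lemma treeDeriv_subset (P : Set α) : treeDeriv P ⊆ P := diff_subset

lemma derivIter_anti (P : Set α) : ∀ {ξ η : Ordinal.{u}}, ξ ≤ η →
    derivIter P η ⊆ derivIter P ξ := by
  intro ξ η
  induction η using Ordinal.induction with
  | _ η IH =>
    intro hle
    rcases Ordinal.zero_or_succ_or_isSuccLimit η with h0 | ⟨a, ha⟩ | hlim
    · subst h0; rw [nonpos_iff_eq_zero.mp hle]
    · subst ha
      rcases lt_or_eq_of_le hle with hlt | heq
      · have h1 : ξ ≤ a := Order.lt_succ_iff.mp hlt
        have : derivIter P (Order.succ a) ⊆ derivIter P a := by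
          rw [← Ordinal.add_one_eq_succ, derivIter_succ]
          exact treeDeriv_subset _
        exact this.trans (IH a (Order.lt_succ a) h1)
      · rw [heq]
    · rcases lt_or_eq_of_le hle with hlt | heq
      · rw [derivIter_limit P hlim]
        exact iInter_subset _ (⟨ξ, hlt⟩ : Set.Iio η)
      · rw [heq]

lemma derivIter_subset (P : Set α) (ξ : Ordinal.{u}) : derivIter P ξ ⊆ P := by
  have := derivIter_anti P (zero_le (a := ξ))
  rwa [derivIter_zero] at this

lemma mem_derivIter_of_lt (P : Set α) {t s : α} (ht : t ∈ P) (hts : t < s) :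
    ∀ {ξ : Ordinal.{u}}, s ∈ derivIter P ξ → t ∈ derivIter P ξ := by
  intro ξ
  induction ξ using Ordinal.induction with
  | _ ξ IH =>
    intro hs
    rcases Ordinal.zero_or_succ_or_isSuccLimit ξ with h0 | ⟨a, ha⟩ | hlim
    · subst h0; rw [derivIter_zero]; exact ht
    · subst ha
      rw [← Ordinal.add_one_eq_succ, derivIter_succ] at hs ⊢
      have hsa : s ∈ derivIter P a := hs.1
      have hta : t ∈ derivIter P a := IH a (Order.lt_succ a) hsa
      exact ⟨hta, fun hleaf => hleaf.2 s hsa hts⟩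
    · rw [derivIter_limit P hlim] at hs ⊢
      rw [Set.mem_iInter] at hs ⊢
      exact fun ζ => IH ζ.1 ζ.2 (hs ζ)

end Aux

section Tau

variable {α : Type u} [PartialOrder α] {P : Set α}

lemma tau_bddAbove (hWF : IsWFTree P) (t : α) :
    BddAbove {ξ : Ordinal.{u} | t ∈ derivIter P ξ} := by
  obtain ⟨ξ0, hξ0⟩ := hWF
  refine ⟨ξ0, fun ξ hξ => ?_⟩
  by_contra h
  push_neg at h
  have : t ∈ derivIter P ξ0 := derivIter_anti P h.le hξ
  rw [hξ0] at this
  exact this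

lemma mem_derivIter_tau (hWF : IsWFTree P) {t : α} (ht : t ∈ P) :
    t ∈ derivIter P (treeTau P t) := by
  set S : Set Ordinal.{u} := {ξ | t ∈ derivIter P ξ} with hS
  have h0 : (0 : Ordinal.{u}) ∈ S := by
    simp only [hS, Set.mem_setOf_eq, derivIter_zero]; exact ht
  have hne : S.Nonempty := ⟨0, h0⟩
  have hbdd := tau_bddAbove hWF t
  show t ∈ derivIter P (sSup S)
  rcases Ordinal.zero_or_succ_or_isSuccLimit (sSup S) with h | ⟨a, ha⟩ | hlim
  · rw [h, derivIter_zero]; exact ht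
  · have : a < sSup S := by rw [← ha]; exact Order.lt_succ a
    obtain ⟨ξ, hξS, haξ⟩ := exists_lt_of_lt_csSup hne this
    have hle : ξ ≤ sSup S := le_csSup hbdd hξS
    have : ξ = sSup S := le_antisymm hle (by rw [← ha]; exact Order.succ_le_of_lt haξ)
    rwa [← this]
  · rw [derivIter_limit P hlim, Set.mem_iInter]
    rintro ⟨ζ, hζ⟩
    obtain ⟨ξ, hξS, hζξ⟩ := exists_lt_of_lt_csSup hne hζ
    exact derivIter_anti P hζξ.le hξS

lemma mem_derivIter_iff (hWF : IsWFTree P) {t : α} (ht : t ∈ P) {ξ : Ordinal.{u}} :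
    t ∈ derivIter P ξ ↔ ξ ≤ treeTau P t := by
  constructor
  · intro h; exact le_csSup (tau_bddAbove hWF t) h
  · intro h; exact derivIter_anti P h (mem_derivIter_tau hWF ht)

lemma tau_lt_of_lt (hWF : IsWFTree P) {t s : α} (ht : t ∈ P) (hs : s ∈ P) (hts : t < s) :
    treeTau P s < treeTau P t := by
  have hsmem : s ∈ derivIter P (treeTau P s) := mem_derivIter_tau hWF hs
  have htmem : t ∈ derivIter P (treeTau P s) := mem_derivIter_of_lt P ht hts hsmem
  have : t ∈ derivIter P (treeTau P s + 1) := by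
    rw [derivIter_succ]
    exact ⟨htmem, fun hleaf => hleaf.2 s hsmem hts⟩
  have := (mem_derivIter_iff hWF ht).mp this
  exact lt_of_lt_of_le (lt_add_one _) this

lemma tau_le_of_le (hWF : IsWFTree P) {t s : α} (ht : t ∈ P) (hs : s ∈ P) (hts : t ≤ s) :
    treeTau P s ≤ treeTau P t := by
  rcases eq_or_lt_of_le hts with rfl | h
  · exact le_rfl
  · exact (tau_lt_of_lt hWF ht hs h).le

end Tau

section Finiteness

variable {α : Type u} [PartialOrder α] {P : Set α}

lemma no_ascent (hWF : IsWFTree P) (g : ℕ → α) (hg : ∀ i, g i ∈ P)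
    (hmono : ∀ i, g i < g (i + 1)) : False := by
  have key : ∀ ξ : Ordinal.{u}, ∀ i, g i ∈ derivIter P ξ := by
    intro ξ
    induction ξ using Ordinal.induction with
    | _ ξ IH =>
      intro i
      rcases Ordinal.zero_or_succ_or_isSuccLimit ξ with h0 | ⟨a, ha⟩ | hlim
      · subst h0; rw [derivIter_zero]; exact hg i
      · subst ha
        rw [← Ordinal.add_one_eq_succ, derivIter_succ]
        refine ⟨IH a (Order.lt_succ a) i, fun hleaf => ?_⟩
        exact hleaf.2 (g (i + 1)) (IH a (Order.lt_succ a) (i + 1)) (hmono i)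
      · rw [derivIter_limit P hlim, Set.mem_iInter]
        exact fun ζ => IH ζ.1 ζ.2 i
  obtain ⟨ξ0, hξ0⟩ := hWF
  have := key ξ0 0
  rw [hξ0] at this
  exact this

lemma anc_finite (hP : IsTree P) (hWF : IsWFTree P) {t : α} (ht : t ∈ P) :
    {s ∈ P | s ≤ t}.Finite := by
  by_contra hinf
  set S := {s ∈ P | s ≤ t} with hSdef
  have hSinf : S.Infinite := hinf
  have hchain : IsChain (· ≤ ·) S := (hP t ht).1
  have hwf : S.IsWF := (hP t ht).2
  -- build a decreasing sequence of infinite subsets, removing the min each time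
  let T : ℕ → {A : Set α // A.Infinite ∧ A ⊆ S} :=
    fun m => Nat.rec ⟨S, hSinf, subset_rfl⟩
      (fun _ p => ⟨p.1 \ {(hwf.mono p.2.2).min p.2.1.nonempty},
        p.2.1.diff (Set.finite_singleton _), Set.diff_subset.trans p.2.2⟩) m
  let g : ℕ → α := fun m => (hwf.mono (T m).2.2).min (T m).2.1.nonempty
  have hgmem : ∀ m, g m ∈ (T m).1 := fun m => Set.IsWF.min_mem _ _
  have hgS : ∀ m, g m ∈ S := fun m => (T m).2.2 (hgmem m)
  have hstep : ∀ m, g m < g (m + 1) := by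
    intro m
    have h1 : g (m + 1) ∈ (T m).1 \ {g m} := hgmem (m + 1)
    have hne : g (m + 1) ≠ g m := by
      intro h; exact h1.2 (by simp [h])
    have hnlt : ¬ g (m + 1) < g m := Set.IsWF.not_lt_min _ _ h1.1
    rcases hchain ((T m).2.2 h1.1) (hgS m) hne with h | h
    · exact absurd (lt_of_le_of_ne h hne) hnlt
    · exact lt_of_le_of_ne h (Ne.symm hne)
  exact no_ascent hWF g (fun i => (hgS i).1) hstep

end Finiteness

section Children

variable {α : Type u} [PartialOrder α]

/-- `s` is an immediate successor of `t` inside `P`. -/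
def ChildOf (P : Set α) (t s : α) : Prop :=
  s ∈ P ∧ t < s ∧ ∀ y ∈ P, ¬ (t < y ∧ y < s)

/-- `r` is a minimal element of `P`. -/
def TRoot (P : Set α) (r : α) : Prop :=
  r ∈ P ∧ ∀ x ∈ P, ¬ x < r

variable {P : Set α}

lemma exists_child (hP : IsTree P) (hWF : IsWFTree P) {t : α} (ht : t ∈ P)
    {ζ : Ordinal.{u}} (hζ : ζ < treeTau P t) :
    ∃ s, ChildOf P t s ∧ ζ ≤ treeTau P s ∧ treeTau P s < treeTau P t := by
  have h1 : t ∈ derivIter P (ζ + 1) := by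
    rw [mem_derivIter_iff hWF ht]
    rw [Ordinal.add_one_eq_succ]
    exact Order.succ_le_of_lt hζ
  rw [derivIter_succ] at h1
  have h2 : ¬ (∀ y ∈ derivIter P ζ, ¬ t < y) := fun h => h1.2 ⟨h1.1, h⟩
  push_neg at h2
  obtain ⟨s', hs'ζ, hts'⟩ := h2
  have hs'P : s' ∈ P := derivIter_subset P ζ hs'ζ
  set C := {y ∈ P | t < y ∧ y ≤ s'} with hC
  have hCsub : C ⊆ {y ∈ P | y ≤ s'} := fun y hy => ⟨hy.1, hy.2.2⟩
  have hwf : C.IsWF := (hP s' hs'P).2.subset hCsub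
  have hCne : C.Nonempty := ⟨s', hs'P, hts', le_rfl⟩
  set m := hwf.min hCne with hm
  have hmC : m ∈ C := hwf.min_mem hCne
  have hchild : ChildOf P t m := by
    refine ⟨hmC.1, hmC.2.1, fun y hy hby => ?_⟩
    have : y ∈ C := ⟨hy, hby.1, hby.2.le.trans hmC.2.2⟩
    exact hwf.not_lt_min hCne this hby.2
  have hms' : treeTau P s' ≤ treeTau P m := tau_le_of_le hWF hmC.1 hs'P hmC.2.2
  have hζs' : ζ ≤ treeTau P s' := (mem_derivIter_iff hWF hs'P).mp hs'ζ
  exact ⟨m, hchild, hζs'.trans hms', tau_lt_of_lt hWF ht hmC.1 hmC.2.1⟩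

lemma exists_root (hP : IsTree P) (hWF : IsWFTree P) {t : α} (ht : t ∈ P) :
    ∃ r, TRoot P r ∧ treeTau P t ≤ treeTau P r := by
  set S := {s ∈ P | s ≤ t} with hS
  have hwf : S.IsWF := (hP t ht).2
  have hne : S.Nonempty := ⟨t, ht, le_rfl⟩
  set r := hwf.min hne with hr
  have hrS : r ∈ S := hwf.min_mem hne
  refine ⟨r, ⟨hrS.1, fun x hx hxr => ?_⟩, tau_le_of_le hWF hrS.1 ht hrS.2⟩
  exact hwf.not_lt_min hne ⟨hx, hxr.le.trans hrS.2⟩ hxr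

lemma child_unique (hP : IsTree P) {t t' s : α} (h : ChildOf P t s) (h' : ChildOf P t' s)
    (htP : t ∈ P) (ht'P : t' ∈ P) : t = t' := by
  by_contra hne
  have hchain := (hP s h.1).1
  rcases hchain (x := t) (y := t') ⟨htP, h.2.1.le⟩ ⟨ht'P, h'.2.1.le⟩ hne with hle | hle
  · exact h.2.2 t' ht'P ⟨lt_of_le_of_ne hle hne, h'.2.1⟩
  · exact h'.2.2 t htP ⟨lt_of_le_of_ne hle (Ne.symm hne), h.2.1⟩

lemma le_parent (hP : IsTree P) {t s v : α} (h : ChildOf P t s) (htP : t ∈ P)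
    (hvP : v ∈ P) (hvs : v < s) : v ≤ t := by
  by_contra hvt
  have hchain := (hP s h.1).1
  have hne : v ≠ t := fun he => hvt (he ▸ le_rfl)
  rcases hchain (x := v) (y := t) ⟨hvP, hvs.le⟩ ⟨htP, h.2.1.le⟩ hne with hle | hle
  · exact hvt hle
  · exact h.2.2 v hvP ⟨lt_of_le_of_ne hle (Ne.symm hne), hvs⟩

end Children

section Pigeon

lemma pigeon {β : Type v} [Finite β] [Nonempty β] {o : Ordinal.{u}}
    (g : ∀ ζ : Ordinal.{u}, ζ < o → β) :
    ∃ b : β, ∀ ζ, ζ < o → ∃ ζ', ∃ h' : ζ' < o, ζ ≤ ζ' ∧ g ζ' h' = b := by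
  by_contra h
  push_neg at h
  choose z hz1 hz2 using h
  obtain ⟨b, hb⟩ := Finite.exists_max z
  set m := z b with hm
  have hmo : m < o := hz1 b
  set b0 := g m hmo with hb0
  exact hz2 b0 m hmo (hb b0) rfl

end Pigeon

section PerfectDef

variable {α : Type u} [PartialOrder α]

/-- `w` is a strict chain in `P` all of whose entries are `≤ t`. -/
def ChB {n : ℕ} (P : Set α) (t : α) (w : Fin n → α) : Prop :=
  (∀ i j : Fin n, i < j → w i < w j) ∧ ∀ i, w i ∈ P ∧ w i ≤ t

/-- vacuous chain condition (its entries lie in the empty set); for `n = 0` this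
holds of the unique empty tuple, for `n ≥ 1` it never holds. -/
def ChBE {n : ℕ} (w : Fin n → α) : Prop := ∀ i : Fin n, w i ∈ (∅ : Set α)

lemma ChBE.toChB {n : ℕ} {P : Set α} {t : α} {w : Fin n → α} (h : ChBE w) : ChB P t w :=
  ⟨fun i _ _ => absurd (h i) (Set.notMem_empty _),
   fun i => absurd (h i) (Set.notMem_empty _)⟩

/-- The key recursive notion: `t` carries a commitment `φ` on chains below it which can be
realized by a full-rank subtree above `t`. -/
inductive PerfT (P : Set α) {n k : ℕ} (f : (Fin (n + 1) → α) → Fin (k + 1)) :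
    α → ((Fin n → α) → Fin (k + 1)) → Prop where
  | intro (t : α) (φ : (Fin n → α) → Fin (k + 1))
      (hleaf : treeTau P t = 0 → ∀ w, ChB P t w → f (Fin.snoc w t) = φ w)
      (s : ∀ ζ : Ordinal.{u}, ζ < treeTau P t → α)
      (ψ : ∀ ζ : Ordinal.{u}, ζ < treeTau P t → ((Fin n → α) → Fin (k + 1)))
      (hstep : ∀ ζ (h : ζ < treeTau P t), ChildOf P t (s ζ h) ∧ ζ ≤ treeTau P (s ζ h) ∧
        treeTau P (s ζ h) < treeTau P t ∧ (∀ w, ChB P t w → ψ ζ h w = φ w))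
      (hrec : ∀ ζ (h : ζ < treeTau P t), PerfT P f (s ζ h) (ψ ζ h)) :
      PerfT P f t φ

lemma PerfT.intro' {P : Set α} {n k : ℕ} {f : (Fin (n + 1) → α) → Fin (k + 1)}
    (t : α) (φ : (Fin n → α) → Fin (k + 1))
    (hleaf : treeTau P t = 0 → ∀ w, ChB P t w → f (Fin.snoc w t) = φ w)
    (hstep : ∀ ζ, ζ < treeTau P t → ∃ s ψ, ChildOf P t s ∧ ζ ≤ treeTau P s ∧
      treeTau P s < treeTau P t ∧ (∀ w, ChB P t w → ψ w = φ w) ∧ PerfT P f s ψ) :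
    PerfT P f t φ := by
  choose s ψ h1 h2 h3 h4 h5 using hstep
  exact PerfT.intro t φ hleaf s ψ (fun ζ h => ⟨h1 ζ h, h2 ζ h, h3 ζ h, h4 ζ h⟩) h5

lemma PerfT.leaf {P : Set α} {n k : ℕ} {f : (Fin (n + 1) → α) → Fin (k + 1)} {t : α}
    {φ : (Fin n → α) → Fin (k + 1)} (h : PerfT P f t φ) (h0 : treeTau P t = 0) :
    ∀ w, ChB P t w → f (Fin.snoc w t) = φ w := by
  cases h with
  | intro t φ hleaf s ψ hstep hrec => exact hleaf h0

lemma PerfT.step {P : Set α} {n k : ℕ} {f : (Fin (n + 1) → α) → Fin (k + 1)} {t : α}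
    {φ : (Fin n → α) → Fin (k + 1)} (h : PerfT P f t φ) :
    ∀ ζ, ζ < treeTau P t → ∃ s ψ, ChildOf P t s ∧ ζ ≤ treeTau P s ∧
      treeTau P s < treeTau P t ∧ (∀ w, ChB P t w → ψ w = φ w) ∧ PerfT P f s ψ := by
  cases h with
  | intro t φ hleaf s ψ hstep hrec =>
    intro ζ hζ
    exact ⟨s ζ hζ, ψ ζ hζ, (hstep ζ hζ).1, (hstep ζ hζ).2.1, (hstep ζ hζ).2.2.1,
      (hstep ζ hζ).2.2.2, hrec ζ hζ⟩

lemma exists_perfT {P : Set α} (hP : IsTree P) (hWF : IsWFTree P) {n k : ℕ}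
    (f : (Fin (n + 1) → α) → Fin (k + 1)) : ∀ t ∈ P, ∃ φ, PerfT P f t φ := by
  suffices H : ∀ o : Ordinal.{u}, ∀ t ∈ P, treeTau P t = o → ∃ φ, PerfT P f t φ by
    exact fun t ht => H _ t ht rfl
  intro o
  induction o using Ordinal.induction with
  | _ o IH =>
    intro t ht hτ
    by_cases h0 : treeTau P t = 0
    · refine ⟨fun w => f (Fin.snoc w t), PerfT.intro' t _ (fun _ w _ => rfl) ?_⟩
      intro ζ hζ
      rw [h0] at hζ
      exact absurd hζ (not_lt_of_ge (zero_le (a := ζ)))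
    · -- witnesses for every ζ < τ t
      have hwit : ∀ ζ : Ordinal.{u}, ζ < o → ∃ sψ : α × ((Fin n → α) → Fin (k + 1)),
          ChildOf P t sψ.1 ∧ ζ ≤ treeTau P sψ.1 ∧ treeTau P sψ.1 < treeTau P t ∧
          PerfT P f sψ.1 sψ.2 := by
        intro ζ hζ
        obtain ⟨s, hcs, h1, h2⟩ := exists_child hP hWF ht (hτ ▸ hζ)
        obtain ⟨ψ, hψ⟩ := IH (treeTau P s) (hτ ▸ h2) s hcs.1 rfl
        exact ⟨(s, ψ), hcs, h1, h2, hψ⟩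
      set K := {w : Fin n → α | ChB P t w} with hK
      have hKfin : K.Finite := by
        have hanc : {s ∈ P | s ≤ t}.Finite := anc_finite hP hWF ht
        have : K ⊆ {w : Fin n → α | ∀ i, w i ∈ {s ∈ P | s ≤ t}} :=
          fun w hw i => ⟨(hw.2 i).1, (hw.2 i).2⟩
        exact (Set.Finite.pi' (fun _ => hanc)).subset this
      haveI : Finite ↥K := hKfin.to_subtype
      haveI : Nonempty (↥K → Fin (k + 1)) := ⟨fun _ => 0⟩
      set g : ∀ ζ : Ordinal.{u}, ζ < o → (↥K → Fin (k + 1)) :=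
        fun ζ hζ => fun w => (hwit ζ hζ).choose.2 w.1 with hg
      obtain ⟨ρ, hρ⟩ := pigeon g
      classical
      refine ⟨fun w => if h : w ∈ K then ρ ⟨w, h⟩ else 0, PerfT.intro' t _ ?_ ?_⟩
      · intro hz; exact absurd (hτ ▸ hz) h0
      · intro ζ hζ
        obtain ⟨ζ', h', hle, heq⟩ := hρ ζ (hτ ▸ hζ)
        obtain ⟨hc, h1, h2, h3⟩ := (hwit ζ' h').choose_spec
        refine ⟨(hwit ζ' h').choose.1, (hwit ζ' h').choose.2, hc, hle.trans h1, h2, ?_, h3⟩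
        intro w hw
        have := congrFun heq ⟨w, hw⟩
        simp only [hg] at this
        rw [this, dif_pos (show w ∈ K from hw)]

end PerfectDef

section ReachDef

variable {α : Type u} [PartialOrder α]

open Classical in
/-- canonical commitment for a child `s` of `t`, extending the commitment `φ` at `t`. -/
noncomputable def nxt (P : Set α) {n k : ℕ} (f : (Fin (n + 1) → α) → Fin (k + 1))
    (t : α) (φ : (Fin n → α) → Fin (k + 1)) (s : α) : (Fin n → α) → Fin (k + 1) :=
  if h : ∃ ψ, (∀ w, ChB P t w → ψ w = φ w) ∧ PerfT P f s ψ then h.choose else fun _ => 0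

open Classical in
/-- canonical commitment at a root. -/
noncomputable def seedφ (P : Set α) {n k : ℕ} (f : (Fin (n + 1) → α) → Fin (k + 1))
    (ρ0 : (Fin n → α) → Fin (k + 1)) (r : α) : (Fin n → α) → Fin (k + 1) :=
  if h : ∃ φ, PerfT P f r φ ∧ ∀ w, ChBE w → φ w = ρ0 w then h.choose else fun _ => 0

/-- The canonical subtree: reachable pairs (node, commitment). -/
inductive Reach (P : Set α) {n k : ℕ} (f : (Fin (n + 1) → α) → Fin (k + 1))
    (ρ0 : (Fin n → α) → Fin (k + 1)) : α → ((Fin n → α) → Fin (k + 1)) → Prop where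
  | seed (r : α) (hr : TRoot P r) (hg : ∃ φ, PerfT P f r φ ∧ ∀ w, ChBE w → φ w = ρ0 w) :
      Reach P f ρ0 r (seedφ P f ρ0 r)
  | step (t : α) (φ : (Fin n → α) → Fin (k + 1)) (s : α) (h1 : Reach P f ρ0 t φ)
      (h2 : ChildOf P t s)
      (h3 : ∃ ψ, (∀ w, ChB P t w → ψ w = φ w) ∧ PerfT P f s ψ) :
      Reach P f ρ0 s (nxt P f t φ s)

variable {P : Set α} {n k : ℕ} {f : (Fin (n + 1) → α) → Fin (k + 1)}
  {ρ0 : (Fin n → α) → Fin (k + 1)}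

lemma nxt_spec {t : α} {φ : (Fin n → α) → Fin (k + 1)} {s : α}
    (h : ∃ ψ, (∀ w, ChB P t w → ψ w = φ w) ∧ PerfT P f s ψ) :
    (∀ w, ChB P t w → nxt P f t φ s w = φ w) ∧ PerfT P f s (nxt P f t φ s) := by
  rw [nxt, dif_pos h]
  exact h.choose_spec

lemma seedφ_spec {r : α} (h : ∃ φ, PerfT P f r φ ∧ ∀ w, ChBE w → φ w = ρ0 w) :
    PerfT P f r (seedφ P f ρ0 r) ∧ ∀ w, ChBE w → seedφ P f ρ0 r w = ρ0 w := by
  rw [seedφ, dif_pos h]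
  exact h.choose_spec

lemma Reach.perfT {t : α} {φ : (Fin n → α) → Fin (k + 1)} (h : Reach P f ρ0 t φ) :
    PerfT P f t φ := by
  induction h with
  | seed r hr hg => exact (seedφ_spec hg).1
  | step t φ s h1 h2 h3 IH => exact (nxt_spec h3).2

lemma Reach.memP {t : α} {φ : (Fin n → α) → Fin (k + 1)} (h : Reach P f ρ0 t φ) :
    t ∈ P := by
  induction h with
  | seed r hr hg => exact hr.1
  | step t φ s h1 h2 h3 IH => exact h2.1

lemma Reach.unique (hP : IsTree P) {t : α} {φ : (Fin n → α) → Fin (k + 1)}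
    (h : Reach P f ρ0 t φ) :
    ∀ {φ'}, Reach P f ρ0 t φ' → φ = φ' := by
  induction h with
  | seed r hr hg =>
    intro φ' h2
    cases h2 with
    | seed r hr' hg' => rfl
    | step t0 φ0 s h1' h2' h3' => exact absurd h2'.2.1 (hr.2 t0 h1'.memP)
  | step t0 φ0 s h1 h2 h3 IH =>
    intro φ' h4
    cases h4 with
    | seed r hr' hg' => exact absurd h2.2.1 (hr'.2 t0 h1.memP)
    | step t0' φ0' s h1' h2' h3' =>
      have het : t0 = t0' := child_unique hP h2 h2' h1.memP h1'.memP
      subst het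
      rw [IH h1']

lemma Reach.anc (hP : IsTree P) {t : α} {φ : (Fin n → α) → Fin (k + 1)}
    (h : Reach P f ρ0 t φ) :
    ∀ v, v ∈ P → v ≤ t → ∃ φv, Reach P f ρ0 v φv := by
  induction h with
  | seed r hr hg =>
    intro v hvP hvr
    have : v = r := (eq_or_lt_of_le hvr).resolve_right (hr.2 v hvP)
    exact ⟨seedφ P f ρ0 r, this ▸ Reach.seed r hr hg⟩
  | step t0 φ0 s h1 h2 h3 IH =>
    intro v hvP hvs
    rcases eq_or_lt_of_le hvs with rfl | hlt
    · exact ⟨nxt P f t0 φ0 v, Reach.step t0 φ0 v h1 h2 h3⟩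
    · exact IH v hvP (le_parent hP h2 h1.memP hvP hlt)

/-- Stabilization: the value of the commitment on a chain lying below `v ≤ t` agrees
with the commitment at `v`. -/
lemma Reach.stab (hP : IsTree P) {t : α} {φ : (Fin n → α) → Fin (k + 1)}
    (h : Reach P f ρ0 t φ) :
    ∀ v (φv : (Fin n → α) → Fin (k + 1)), Reach P f ρ0 v φv → v ≤ t →
      ∀ w, ChB P v w → φ w = φv w := by
  induction h with
  | seed r hr hg =>
    intro v φv hv hvr w hw
    have : v = r := (eq_or_lt_of_le hvr).resolve_right (hr.2 v hv.memP)
    subst this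
    rw [((Reach.seed v hr hg).unique hP) hv]
  | step t0 φ0 s h1 h2 h3 IH =>
    intro v φv hv hvs w hw
    rcases eq_or_lt_of_le hvs with rfl | hlt
    · rw [((Reach.step t0 φ0 v h1 h2 h3).unique hP) hv]
    · have hvt0 : v ≤ t0 := le_parent hP h2 h1.memP hv.memP hlt
      have hwt0 : ChB P t0 w := ⟨hw.1, fun i => ⟨(hw.2 i).1, (hw.2 i).2.trans hvt0⟩⟩
      rw [(nxt_spec h3).1 w hwt0]
      exact IH v φv hv hvt0 w hw

/-- Constant value on vacuous chains (used for `n = 0`). -/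
lemma Reach.stabE (hP : IsTree P) {t : α} {φ : (Fin n → α) → Fin (k + 1)}
    (h : Reach P f ρ0 t φ) : ∀ w, ChBE w → φ w = ρ0 w := by
  induction h with
  | seed r hr hg => exact (seedφ_spec hg).2
  | step t0 φ0 s h1 h2 h3 IH =>
    intro w hw
    rw [(nxt_spec h3).1 w hw.toChB]
    exact IH w hw

end ReachDef

section Dagger

variable {α : Type u} [PartialOrder α] {P : Set α}

lemma derivIter_eq_tau (hWF : IsWFTree P) (ξ : Ordinal.{u}) :
    derivIter P ξ = {t ∈ P | ξ ≤ treeTau P t} := by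
  ext t
  constructor
  · intro h
    have htP : t ∈ P := derivIter_subset P ξ h
    exact ⟨htP, (mem_derivIter_iff hWF htP).mp h⟩
  · intro ⟨htP, h⟩
    exact (mem_derivIter_iff hWF htP).mpr h

lemma derivIter_eq_of_dagger (hWF : IsWFTree P) {Q : Set α} (hQP : Q ⊆ P)
    (hdag : ∀ t ∈ Q, ∀ ζ, ζ < treeTau P t → ∃ s ∈ Q, t < s ∧ ζ ≤ treeTau P s) :
    ∀ ξ : Ordinal.{u}, derivIter Q ξ = {t ∈ Q | ξ ≤ treeTau P t} := by
  intro ξ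
  induction ξ using Ordinal.induction with
  | _ ξ IH =>
    rcases Ordinal.zero_or_succ_or_isSuccLimit ξ with h0 | ⟨a, ha⟩ | hlim
    · subst h0
      rw [derivIter_zero]
      ext t; simp [zero_le]
    · subst ha
      rw [← Ordinal.add_one_eq_succ, derivIter_succ, IH a (Order.lt_succ a)]
      ext t
      constructor
      · rintro ⟨⟨htQ, hat⟩, hnl⟩
        have : ∃ s ∈ {t ∈ Q | a ≤ treeTau P t}, t < s := by
          by_contra hno
          push_neg at hno
          exact hnl ⟨⟨htQ, hat⟩, fun s hs => hno s hs⟩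
        obtain ⟨s, ⟨hsQ, has⟩, hts⟩ := this
        refine ⟨htQ, ?_⟩
        have := tau_lt_of_lt hWF (hQP htQ) (hQP hsQ) hts
        rw [Ordinal.add_one_eq_succ]
        exact Order.succ_le_of_lt (lt_of_le_of_lt has this)
      · rintro ⟨htQ, hat⟩
        have haτ : a < treeTau P t := by
          rw [Ordinal.add_one_eq_succ] at hat
          exact (Order.succ_le_iff).mp hat
        obtain ⟨s, hsQ, hts, has⟩ := hdag t htQ a haτ
        refine ⟨⟨htQ, haτ.le⟩, fun hleaf => ?_⟩
        exact hleaf.2 s ⟨hsQ, has⟩ hts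
    · rw [derivIter_limit Q hlim]
      ext t
      rw [Set.mem_iInter]
      constructor
      · intro h
        have h0 := h ⟨0, hlim.pos⟩
        rw [IH 0 hlim.pos] at h0
        refine ⟨h0.1, ?_⟩
        by_contra hno
        push_neg at hno
        have hsucc : treeTau P t + 1 < ξ := by
          rw [Ordinal.add_one_eq_succ]
          exact hlim.succ_lt hno
        have := h ⟨treeTau P t + 1, hsucc⟩
        rw [IH _ hsucc] at this
        have h2 := this.2
        rw [Ordinal.add_one_eq_succ] at h2
        exact absurd (Order.succ_le_iff.mp h2) (lt_irrefl _)
      · intro ⟨htQ, hξτ⟩ ζ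
        rw [IH ζ.1 ζ.2]
        exact ⟨htQ, (ζ.2.le.trans hξτ).trans' le_rfl⟩

end Dagger

section Rho

variable {α : Type u} [PartialOrder α] {P : Set α}

lemma exists_rho0 (hP : IsTree P) (hWF : IsWFTree P) {n k : ℕ}
    (f : (Fin (n + 1) → α) → Fin (k + 1)) :
    ∃ ρ0 : (Fin n → α) → Fin (k + 1), ∀ t ∈ P, ∃ r, TRoot P r ∧
      (∃ φ, PerfT P f r φ ∧ ∀ w, ChBE w → φ w = ρ0 w) ∧ treeTau P t ≤ treeTau P r := by
  classical
  set K : Set (Fin n → α) := {w | ChBE w} with hK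
  have hKfin : K.Finite := by
    have : K ⊆ {w : Fin n → α | ∀ i, w i ∈ (∅ : Set α)} := fun w hw i => hw i
    exact (Set.Finite.pi' (fun _ => Set.finite_empty)).subset this
  haveI : Finite ↥K := hKfin.to_subtype
  haveI : Nonempty (↥K → Fin (k + 1)) := ⟨fun _ => 0⟩
  by_contra hc
  push_neg at hc
  choose tf htP hbad using hc
  set e : (↥K → Fin (k + 1)) → ((Fin n → α) → Fin (k + 1)) :=
    fun ρ w => if h : w ∈ K then ρ ⟨w, h⟩ else 0 with he
  obtain ⟨ρm, hρm⟩ := Finite.exists_max (fun ρ : ↥K → Fin (k + 1) => treeTau P (tf (e ρ)))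
  obtain ⟨r, hroot, hτr⟩ := exists_root hP hWF (htP (e ρm))
  obtain ⟨φ, hφ⟩ := exists_perfT hP hWF f r hroot.1
  set ρ' : ↥K → Fin (k + 1) := fun w => φ w.1 with hρ'
  have hagree : ∀ w, ChBE w → φ w = e ρ' w := by
    intro w hw
    simp only [he]
    rw [dif_pos (show w ∈ K from hw)]
  have := hbad (e ρ') r hroot ⟨φ, hφ, hagree⟩
  have hle : treeTau P (tf (e ρ')) ≤ treeTau P (tf (e ρm)) := hρm ρ'
  exact absurd ((hle.trans hτr).trans_lt this) (lt_irrefl _)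

end Rho


/-- for a well-founded tree `P` and a coloring `f` of
`E_n(P) = {(t_0,…,t_n) : t_0 < … < t_{n-1} ≤ t_n, t_n ∈ Leaves(P)}` by `k+1`
colors, there are a subtree `Q` of full rank with `τ_Q = τ_P|_Q` and a function
`F` on `Λ_n(Q)` with `F(t_0,…,t_{n-1}) = f(t_0,…,t_{n-1},t_n)` on `E_n(Q)`. -/
theorem statement14 {α : Type u} [PartialOrder α] (P : Set α) (hP : IsTree P)
    (hWF : IsWFTree P) (n k : ℕ) (f : (Fin (n + 1) → α) → Fin (k + 1)) :
    ∃ Q ⊆ P, treeRank Q = treeRank P ∧ (∀ t ∈ Q, treeTau Q t = treeTau P t) ∧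
      ∃ F : (Fin n → α) → Fin (k + 1),
        ∀ t : Fin (n + 1) → α, (∀ i, t i ∈ Q) →
          (∀ i j : Fin (n + 1), i < j → ((j : ℕ) < n → t i < t j) ∧ t i ≤ t j) →
          t (Fin.last n) ∈ treeLeaves Q →
          F (fun i => t i.castSucc) = f t := by
  classical
  obtain ⟨ρ0, hρ0⟩ := exists_rho0 hP hWF f
  set Q : Set α := {x | ∃ φ, Reach P f ρ0 x φ} with hQ
  have hQP : Q ⊆ P := by rintro x ⟨φ, h⟩; exact h.memP
  have hdag : ∀ t ∈ Q, ∀ ζ, ζ < treeTau P t → ∃ s ∈ Q, t < s ∧ ζ ≤ treeTau P s := by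
    rintro t ⟨φ, hre⟩ ζ hζ
    obtain ⟨s, ψ, hc, h1, h2, hag, hperf⟩ := hre.perfT.step ζ hζ
    exact ⟨s, ⟨nxt P f t φ s, Reach.step t φ s hre hc ⟨ψ, hag, hperf⟩⟩, hc.2.1, h1⟩
  have hQD := derivIter_eq_of_dagger hWF hQP hdag
  have hcof : ∀ t ∈ P, ∃ r ∈ Q, treeTau P t ≤ treeTau P r := by
    intro t ht
    obtain ⟨r, hr, hg, hτ⟩ := hρ0 t ht
    exact ⟨r, ⟨seedφ P f ρ0 r, Reach.seed r hr hg⟩, hτ⟩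
  refine ⟨Q, hQP, ?_, ?_, ?_⟩
  · -- rank
    unfold treeRank
    congr 1
    ext ξ
    simp only [Set.mem_setOf_eq]
    constructor
    · intro hQe
      rw [derivIter_eq_tau hWF, Set.eq_empty_iff_forall_notMem]
      rintro t ⟨htP, hξ⟩
      obtain ⟨r, hrQ, hle⟩ := hcof t htP
      have : r ∈ derivIter Q ξ := by rw [hQD ξ]; exact ⟨hrQ, hξ.trans hle⟩
      rw [hQe] at this
      exact this
    · intro hPe
      rw [hQD ξ, Set.eq_empty_iff_forall_notMem]
      rintro t ⟨htQ, hξ⟩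
      have : t ∈ derivIter P ξ := by
        rw [derivIter_eq_tau hWF]; exact ⟨hQP htQ, hξ⟩
      rw [hPe] at this
      exact this
  · -- tau
    intro t htQ
    have hset : {ξ : Ordinal.{u} | t ∈ derivIter Q ξ} = Set.Iic (treeTau P t) := by
      ext ξ
      rw [Set.mem_setOf_eq, hQD ξ]
      exact ⟨fun h => h.2, fun h => ⟨htQ, h⟩⟩
    show sSup {ξ : Ordinal.{u} | t ∈ derivIter Q ξ} = treeTau P t
    rw [hset, csSup_Iic]
  · -- the function F
    set F : (Fin n → α) → Fin (k + 1) := fun w =>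
      if h : ∃ tφ : α × ((Fin n → α) → Fin (k + 1)),
          Reach P f ρ0 tφ.1 tφ.2 ∧ ChB P tφ.1 w then h.choose.2 w else 0 with hF
    refine ⟨F, ?_⟩
    intro tv htv hord hleaf
    set ℓ := tv (Fin.last n) with hℓ
    set w : Fin n → α := fun i => tv i.castSucc with hw
    obtain ⟨φℓ, hreℓ⟩ := hleaf.1
    have hℓQ : ℓ ∈ Q := hleaf.1
    have hτℓ : treeTau P ℓ = 0 := by
      by_contra hne
      obtain ⟨s, hsQ, hlt, _⟩ := hdag ℓ hℓQ 0 (pos_iff_ne_zero.mpr hne)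
      exact hleaf.2 s hsQ hlt
    have hChB : ChB P ℓ w := by
      constructor
      · intro i j hij
        refine (hord i.castSucc j.castSucc (Fin.castSucc_lt_castSucc_iff.mpr hij)).1 ?_
        simpa using j.isLt
      · intro i
        exact ⟨hQP (htv _), (hord i.castSucc (Fin.last n) (Fin.castSucc_lt_last i)).2⟩
    have hfval : f (Fin.snoc w ℓ) = φℓ w := hreℓ.perfT.leaf hτℓ w hChB
    have hsnoc : Fin.snoc w ℓ = tv := by
      funext i
      refine Fin.lastCases ?_ ?_ i
      · rw [Fin.snoc_last]
      · intro j
        rw [Fin.snoc_castSucc]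
    have hex : ∃ tφ : α × ((Fin n → α) → Fin (k + 1)),
        Reach P f ρ0 tφ.1 tφ.2 ∧ ChB P tφ.1 w := ⟨(ℓ, φℓ), hreℓ, hChB⟩
    have hre' := hex.choose_spec.1
    have hChB' := hex.choose_spec.2
    have hcons : hex.choose.2 w = φℓ w := by
      rcases isEmpty_or_nonempty (Fin n) with hemp | hne
      · have hwE : ChBE w := fun i => isEmptyElim i
        rw [hre'.stabE hP w hwE, hreℓ.stabE hP w hwE]
      · obtain ⟨i⟩ := hne
        have hpos : 0 < n := i.pos
        set i0 : Fin n := ⟨n - 1, Nat.sub_lt hpos Nat.one_pos⟩ with hi0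
        have htop : ∀ j : Fin n, w j ≤ w i0 := by
          intro j
          rcases eq_or_ne j i0 with rfl | hne'
          · exact le_rfl
          · have hj : j < i0 := by
              have h1 : j.1 ≠ n - 1 := fun h => hne' (Fin.ext h)
              have h2 : j.1 < n := j.isLt
              exact Fin.lt_def.mpr (by simp only [hi0]; omega)
            exact (hChB.1 j i0 hj).le
        set v := w i0 with hv
        have hvP : v ∈ P := (hChB.2 i0).1
        have hvℓ : v ≤ ℓ := (hChB.2 i0).2
        have hvt : v ≤ hex.choose.1 := (hChB'.2 i0).2
        have hChBv : ChB P v w := ⟨hChB.1, fun j => ⟨(hChB.2 j).1, htop j⟩⟩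
        obtain ⟨φv, hrev⟩ := hreℓ.anc hP v hvP hvℓ
        rw [hre'.stab hP v φv hrev hvt w hChBv, hreℓ.stab hP v φv hrev hvℓ w hChBv]
    show F w = f tv
    rw [hF]
    simp only []
    rw [dif_pos hex, hcons, ← hfval, hsnoc]
end

section
/- For every additively indecomposable ordinal γ, every tree Q with rank(Q) = γ, and every subset A of λ(γ), Q has an A-contraction. -/
open Ordinal Set

universe u

set_option linter.dupNamespace false
set_option linter.unusedSectionVars false
namespace S17
variable {α : Type u} [PartialOrder α]
theorem derivIter_zero (P : Set α) : derivIter P 0 = P := Ordinal.limitRecOn_zero _ _ _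
theorem derivIter_succ (P : Set α) (ξ : Ordinal.{u}) :
    derivIter P (ξ + 1) = treeDeriv (derivIter P ξ) := by
  have : ξ + 1 = Order.succ ξ := by simp
  rw [this]; exact Ordinal.limitRecOn_succ _ _ _ _
theorem derivIter_limit (P : Set α) {ξ : Ordinal.{u}} (h : Order.IsSuccLimit ξ) :
    derivIter P ξ = ⋂ (ζ : Set.Iio ξ), derivIter P ζ.1 := Ordinal.limitRecOn_limit _ _ _ _ h
theorem derivIter_succ_subset (P : Set α) (ξ : Ordinal.{u}) :
    derivIter P (ξ + 1) ⊆ derivIter P ξ := by rw [derivIter_succ]; exact diff_subset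
theorem derivIter_anti (P : Set α) : ∀ {ξ ζ : Ordinal.{u}}, ζ ≤ ξ →
    derivIter P ξ ⊆ derivIter P ζ := by
  intro ξ
  induction ξ using Ordinal.limitRecOn with
  | zero => intro ζ h; simp_all [nonpos_iff_eq_zero.1 h]
  | add_one ξ ih =>
    intro ζ h
    rcases eq_or_lt_of_le h with rfl | h'
    · exact fun _ h => h
    · have h2 : ζ ≤ ξ := Order.lt_succ_iff.1 h'
      have : derivIter P (Order.succ ξ) ⊆ derivIter P ξ := by
        rw [← Ordinal.add_one_eq_succ]; exact derivIter_succ_subset P ξ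
      exact fun x hx => ih h2 (this hx)
  | limit ξ hlim ih =>
    intro ζ h
    rcases eq_or_lt_of_le h with rfl | h'
    · exact fun _ h => h
    · rw [derivIter_limit P hlim]
      intro x hx
      exact mem_iInter.1 hx ⟨ζ, h'⟩
theorem derivIter_subset (P : Set α) (ξ : Ordinal.{u}) : derivIter P ξ ⊆ P := by
  have := derivIter_anti P (show (0:Ordinal.{u}) ≤ ξ from zero_le ..)
  rwa [derivIter_zero] at this

/-- rank is a member: `P^{rank P} = ∅` for wf trees. -/
theorem derivIter_rank (P : Set α) (hWF : IsWFTree P) : derivIter P (treeRank P) = ∅ :=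
  csInf_mem hWF

theorem ne_empty_of_lt_rank {P : Set α} {η : Ordinal.{u}} (h : η < treeRank P) :
    derivIter P η ≠ ∅ := fun he => absurd (csInf_le' (s := {ξ | derivIter P ξ = ∅}) he) h.not_ge

theorem lt_rank_of_mem {P : Set α} (hWF : IsWFTree P) {t : α} {ξ : Ordinal.{u}}
    (h : t ∈ derivIter P ξ) : ξ < treeRank P := by
  by_contra hc
  have := derivIter_anti P (not_lt.1 hc) h
  rw [derivIter_rank P hWF] at this
  exact this

/-- the set of stages containing `t` is `Iic (treeTau P t)` for `t ∈ P`. -/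
theorem mem_derivIter_iff_le_tau {P : Set α} (hWF : IsWFTree P) {t : α} (ht : t ∈ P)
    {ξ : Ordinal.{u}} : t ∈ derivIter P ξ ↔ ξ ≤ treeTau P t := by
  have hbdd : BddAbove {ξ : Ordinal.{u} | t ∈ derivIter P ξ} :=
    ⟨treeRank P, fun ξ hξ => (lt_rank_of_mem hWF hξ).le⟩
  have hne : {ξ : Ordinal.{u} | t ∈ derivIter P ξ}.Nonempty :=
    ⟨0, by rwa [mem_setOf_eq, derivIter_zero]⟩
  constructor
  · intro h; exact le_csSup hbdd h
  · intro h
    -- show t ∈ derivIter P (treeTau P t), then anti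
    have htau : t ∈ derivIter P (treeTau P t) := by
      rcases Ordinal.zero_or_succ_or_isSuccLimit (treeTau P t) with h0 | ⟨η, hη⟩ | hlim
      · rw [h0, derivIter_zero]; exact ht
      · -- successor: sSup is attained
        have : ∃ ξ ∈ {ξ : Ordinal.{u} | t ∈ derivIter P ξ}, η < ξ := by
          by_contra hc
          push_neg at hc
          have : treeTau P t ≤ η := csSup_le hne fun ξ hξ => hc ξ hξ
          rw [← hη, ← Ordinal.add_one_eq_succ] at this
          exact absurd this (by simp)
        obtain ⟨ξ, hξ, hηξ⟩ := this
        have : treeTau P t ≤ ξ := by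
          rw [← hη]; exact Order.succ_le_of_lt hηξ
        exact derivIter_anti P this hξ
      · rw [derivIter_limit P hlim]
        refine mem_iInter.2 fun ⟨ζ, hζ⟩ => ?_
        obtain ⟨ξ, hξ, hζξ⟩ := exists_lt_of_lt_csSup hne hζ
        exact derivIter_anti P hζξ.le hξ
    exact derivIter_anti P h htau

theorem tau_lt_rank {P : Set α} (hWF : IsWFTree P) {t : α} (ht : t ∈ P) :
    treeTau P t < treeRank P :=
  lt_rank_of_mem hWF ((mem_derivIter_iff_le_tau hWF ht).2 le_rfl)

/-- F2: if `s < t` and `t ∈ P^ξ` (with `s ∈ P`) then `s ∈ P^{ξ+1}`. -/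
theorem mem_succ_of_lt {P : Set α} {s t : α} (hs : s ∈ P) (hst : s < t) :
    ∀ {ξ : Ordinal.{u}}, t ∈ derivIter P ξ → s ∈ derivIter P (ξ + 1) := by
  intro ξ
  induction ξ using Ordinal.limitRecOn with
  | zero =>
    intro ht
    rw [derivIter_zero] at ht
    rw [show (0:Ordinal.{u}) + 1 = 0 + 1 from rfl, zero_add, show (1:Ordinal.{u}) = 0 + 1 by simp, derivIter_succ, derivIter_zero]
    exact ⟨hs, fun hleaf => hleaf.2 t ht hst⟩
  | add_one ξ ih =>
    skip
    intro ht
    have ht' : t ∈ derivIter P ξ := derivIter_succ_subset P ξ ht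
    have hs' : s ∈ derivIter P (ξ + 1) := ih ht'
    rw [derivIter_succ]
    exact ⟨hs', fun hleaf => hleaf.2 t ht hst⟩
  | limit ξ hlim ih =>
    intro ht
    have hsξ : s ∈ derivIter P ξ := by
      rw [derivIter_limit P hlim] at ht ⊢
      refine mem_iInter.2 fun ⟨ζ, hζ⟩ => ?_
      have := ih ζ hζ (mem_iInter.1 ht ⟨ζ, hζ⟩)
      exact derivIter_succ_subset P ζ this
    rw [derivIter_succ]
    exact ⟨hsξ, fun hleaf => hleaf.2 t ht hst⟩

theorem tau_lt_tau_of_lt {P : Set α} (hWF : IsWFTree P) {s t : α} (hs : s ∈ P) (ht : t ∈ P)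
    (hst : s < t) : treeTau P t < treeTau P s := by
  have h1 : t ∈ derivIter P (treeTau P t) := (mem_derivIter_iff_le_tau hWF ht).2 le_rfl
  have h2 := mem_succ_of_lt hs hst h1
  have := (mem_derivIter_iff_le_tau hWF hs).1 h2
  have h3 : treeTau P t < treeTau P t + 1 := by
    rw [Ordinal.add_one_eq_succ]; exact Order.lt_succ _
  exact lt_of_lt_of_le h3 this

/-- a subset with no maximal element is disjoint from reaching empty: it must be empty. -/
theorem eq_empty_of_no_max {P : Set α} (hWF : IsWFTree P) {Z : Set α} (hZP : Z ⊆ P)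
    (hnomax : ∀ z ∈ Z, ∃ z' ∈ Z, z < z') : Z = ∅ := by
  have key : ∀ ξ : Ordinal.{u}, Z ⊆ derivIter P ξ := by
    intro ξ
    induction ξ using Ordinal.limitRecOn with
    | zero => rwa [derivIter_zero]
    | add_one ξ ih =>
      rw [derivIter_succ]
      intro z hz
      obtain ⟨z', hz', hlt⟩ := hnomax z hz
      exact ⟨ih hz, fun hleaf => hleaf.2 z' (ih hz') hlt⟩
    | limit ξ hlim ih =>
      rw [derivIter_limit P hlim]
      intro z hz
      exact mem_iInter.2 fun ⟨ζ, hζ⟩ => ih ζ hζ hz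
  obtain ⟨ξ, hξ⟩ := hWF
  have := key ξ
  rw [hξ] at this
  exact eq_empty_iff_forall_notMem.2 fun z hz => this hz

/-- every nonempty stage has a leaf: exact realization of `η < rank`. -/
theorem exists_tau_eq {P : Set α} (hWF : IsWFTree P) {η : Ordinal.{u}}
    (h : η < treeRank P) : ∃ t ∈ P, treeTau P t = η := by
  have hne : derivIter P η ≠ ∅ := ne_empty_of_lt_rank h
  -- find an element of P^η not in P^{η+1}
  have : ¬ (derivIter P η ⊆ derivIter P (η + 1)) := by
    intro hsub
    have hnomax : ∀ z ∈ derivIter P η, ∃ z' ∈ derivIter P η, z < z' := by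
      intro z hz
      have := hsub hz
      rw [derivIter_succ] at this
      rcases this with ⟨hz', hnl⟩
      by_contra hc
      push_neg at hc
      exact hnl ⟨hz', fun s hs hlt => hc s hs hlt⟩
    exact hne (eq_empty_of_no_max hWF (derivIter_subset P η) hnomax)
  obtain ⟨t, htη, htη1⟩ := not_subset.1 this
  have htP : t ∈ P := derivIter_subset P η htη
  refine ⟨t, htP, le_antisymm ?_ ((mem_derivIter_iff_le_tau hWF htP).1 htη)⟩
  by_contra hc
  push_neg at hc
  have : η + 1 ≤ treeTau P t := by
    rw [Ordinal.add_one_eq_succ]; exact Order.succ_le_of_lt hc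
  exact htη1 ((mem_derivIter_iff_le_tau hWF htP).2 this)

/-- F3: exact extensions exist. -/
theorem exists_gt_tau_eq {P : Set α} (hWF : IsWFTree P) {t : α} {η : Ordinal.{u}}
    (ht : t ∈ derivIter P (η + 1)) : ∃ s ∈ P, t < s ∧ treeTau P s = η := by
  classical
  set Z : Set α := {s ∈ derivIter P η | t < s ∧ s ∈ derivIter P (η + 1)} with hZ
  have hex : ∃ s ∈ derivIter P η, t < s := by
    rw [derivIter_succ] at ht
    rcases ht with ⟨htη, hnl⟩
    by_contra hc
    push_neg at hc
    exact hnl ⟨htη, fun s hs hlt => hc s hs hlt⟩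
  -- if every extension in P^η is in P^{η+1}, Z has no max
  by_cases hall : ∀ s ∈ derivIter P η, t < s → s ∈ derivIter P (η + 1)
  · exfalso
    have hZne : Z.Nonempty := by
      obtain ⟨s, hs, hts⟩ := hex
      exact ⟨s, hs, hts, hall s hs hts⟩
    have : Z = ∅ := by
      refine eq_empty_of_no_max hWF (fun z hz => derivIter_subset P η hz.1) ?_
      rintro z ⟨hzη, htz, hz1⟩
      rw [derivIter_succ] at hz1
      rcases hz1 with ⟨_, hnl⟩
      have : ∃ s ∈ derivIter P η, z < s := by
        by_contra hc
        push_neg at hc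
        exact hnl ⟨hzη, fun s hs hlt => hc s hs hlt⟩
      obtain ⟨s, hs, hzs⟩ := this
      exact ⟨s, ⟨hs, htz.trans hzs, hall s hs (htz.trans hzs)⟩, hzs⟩
    rw [this] at hZne
    exact not_nonempty_empty hZne
  · push_neg at hall
    obtain ⟨s, hsη, hts, hs1⟩ := hall
    have hsP : s ∈ P := derivIter_subset P η hsη
    refine ⟨s, hsP, hts, le_antisymm ?_ ((mem_derivIter_iff_le_tau hWF hsP).1 hsη)⟩
    by_contra hc
    push_neg at hc
    have : η + 1 ≤ treeTau P s := by
      rw [Ordinal.add_one_eq_succ]; exact Order.succ_le_of_lt hc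
    exact hs1 ((mem_derivIter_iff_le_tau hWF hsP).2 this)


section LemM
variable {P : Set α} (hWF : IsWFTree P) (g : Ordinal.{u} → Ordinal.{u}) (ρ : Ordinal.{u})

/-- The subtree of elements whose `τ` value lies in `g '' (Iio ρ)`. -/
def pullSet (P : Set α) (g : Ordinal.{u} → Ordinal.{u}) (ρ : Ordinal.{u}) : Set α :=
  {t ∈ P | ∃ ζ, ζ < ρ ∧ treeTau P t = g ζ}

variable (hmono : ∀ {ζ ζ'}, ζ < ζ' → ζ' < ρ → g ζ < g ζ')
variable (hbd : ∀ ζ, ζ < ρ → g ζ < treeRank P)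

theorem pullSet_subset : pullSet P g ρ ⊆ P := fun _ h => h.1

include hmono in
theorem g_mono_le {ζ ζ' : Ordinal.{u}} (h : ζ ≤ ζ') (h' : ζ' < ρ) : g ζ ≤ g ζ' := by
  rcases eq_or_lt_of_le h with rfl | h2
  · exact le_rfl
  · exact (hmono h2 h').le

include hmono in
theorem g_lt_iff {ζ ζ' : Ordinal.{u}} (hζ : ζ < ρ) (hζ' : ζ' < ρ) : g ζ < g ζ' ↔ ζ < ζ' := by
  constructor
  · intro h
    by_contra hc
    exact absurd (g_mono_le g ρ hmono (not_lt.1 hc) hζ) h.not_ge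
  · intro h; exact hmono h hζ'

include hWF hmono hbd in
theorem pullSet_derivIter : ∀ {ξ : Ordinal.{u}}, ξ < ρ →
    derivIter (pullSet P g ρ) ξ = {t ∈ pullSet P g ρ | g ξ ≤ treeTau P t} := by
  intro ξ
  induction ξ using Ordinal.limitRecOn with
  | zero =>
    intro h0
    rw [derivIter_zero]
    ext t
    refine ⟨fun ht => ⟨ht, ?_⟩, fun ht => ht.1⟩
    obtain ⟨_, ζ, hζ, hτ⟩ := ht
    rw [hτ]
    exact g_mono_le g ρ hmono (zero_le ..) hζ
  | add_one ξ ih =>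
    skip
    intro hξ1
    have hξ : ξ < ρ := lt_trans (by rw [Ordinal.add_one_eq_succ]; exact Order.lt_succ _) hξ1
    rw [derivIter_succ, ih hξ]
    ext t
    constructor
    · rintro ⟨⟨htQ, hgξ⟩, hnl⟩
      refine ⟨htQ, ?_⟩
      have : ∃ s, s ∈ {t ∈ pullSet P g ρ | g ξ ≤ treeTau P t} ∧ t < s := by
        by_contra hc
        push_neg at hc
        exact hnl ⟨⟨htQ, hgξ⟩, fun s hs hlt => hc s hs hlt⟩
      obtain ⟨s, ⟨hsQ, hgs⟩, hts⟩ := this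
      have hτlt : treeTau P s < treeTau P t :=
        tau_lt_tau_of_lt hWF htQ.1 hsQ.1 hts
      have h1 : g ξ < treeTau P t := lt_of_le_of_lt hgs hτlt
      obtain ⟨_, ζ, hζ, hτ⟩ := htQ
      rw [hτ] at h1 ⊢
      have : ξ < ζ := (g_lt_iff g ρ hmono hξ hζ).1 h1
      exact g_mono_le g ρ hmono (Order.succ_le_of_lt this) hζ
    · rintro ⟨htQ, hgt⟩
      have hg1 : g ξ + 1 ≤ treeTau P t :=
        le_trans (Order.succ_le_of_lt (hmono (by rw [Ordinal.add_one_eq_succ]; exact Order.lt_succ _) hξ1)) hgt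
      have htP1 : t ∈ derivIter P (g ξ + 1) :=
        (mem_derivIter_iff_le_tau hWF htQ.1).2 hg1
      obtain ⟨s, hsP, hts, hτs⟩ := exists_gt_tau_eq hWF htP1
      have hsQ : s ∈ pullSet P g ρ := ⟨hsP, ξ, hξ, hτs⟩
      have htmem : t ∈ {t ∈ pullSet P g ρ | g ξ ≤ treeTau P t} :=
        ⟨htQ, le_trans (le_of_lt (hmono (by rw [Ordinal.add_one_eq_succ]; exact Order.lt_succ _) hξ1)) hgt⟩
      refine ⟨htmem, fun hleaf => ?_⟩
      exact hleaf.2 s ⟨hsQ, hτs ▸ le_rfl⟩ hts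
  | limit ξ hlim ih =>
    intro hξ
    rw [derivIter_limit _ hlim]
    ext t
    constructor
    · intro ht
      have h1 : t ∈ derivIter (pullSet P g ρ) 1 := by
        have h01 : (1 : Ordinal.{u}) < ξ := Ordinal.one_lt_of_isSuccLimit hlim
        exact mem_iInter.1 ht ⟨1, h01⟩
      have htQ : t ∈ pullSet P g ρ := derivIter_subset _ _ h1
      refine ⟨htQ, ?_⟩
      obtain ⟨htP, ζ, hζ, hτ⟩ := htQ
      rw [hτ]
      refine g_mono_le g ρ hmono ?_ hζ
      by_contra hc
      push_neg at hc
      have hζ1 : ζ + 1 < ξ := hlim.succ_lt hc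
      have := mem_iInter.1 ht ⟨ζ + 1, hζ1⟩
      rw [ih (ζ+1) hζ1 (lt_trans hζ1 hξ)] at this
      have : g (ζ + 1) ≤ g ζ := hτ ▸ this.2
      exact absurd this (hmono (by rw [Ordinal.add_one_eq_succ]; exact Order.lt_succ _) (lt_trans hζ1 hξ)).not_ge
    · rintro ⟨htQ, hgt⟩
      refine mem_iInter.2 fun ⟨ζ, hζ⟩ => ?_
      rw [ih ζ hζ (lt_trans hζ hξ)]
      exact ⟨htQ, le_trans (g_mono_le g ρ hmono hζ.le hξ) hgt⟩

include hWF hmono hbd in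
theorem pullSet_derivIter_rho : derivIter (pullSet P g ρ) ρ = ∅ := by
  set Q := pullSet P g ρ with hQdef
  rcases Ordinal.zero_or_succ_or_isSuccLimit ρ with h0 | ⟨η, hη⟩ | hlim
  · rw [h0, derivIter_zero]
    ext t
    simp only [hQdef, pullSet, mem_setOf_eq, mem_empty_iff_false, iff_false]
    rintro ⟨_, ζ, hζ, _⟩
    rw [h0] at hζ
    exact absurd hζ (show (0:Ordinal.{u}) ≤ ζ from zero_le ..).not_gt
  · have hηρ : η < ρ := by rw [← hη]; exact Order.lt_succ _
    have hρ : ρ = η + 1 := by rw [← hη, Ordinal.add_one_eq_succ]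
    rw [hρ, derivIter_succ, hQdef, pullSet_derivIter hWF g ρ hmono hbd hηρ]
    ext t
    simp only [mem_empty_iff_false, iff_false]
    rintro ⟨⟨htQ, hgt⟩, hnl⟩
    have : ∃ s, s ∈ {t ∈ pullSet P g ρ | g η ≤ treeTau P t} ∧ t < s := by
      by_contra hc
      push_neg at hc
      exact hnl ⟨⟨htQ, hgt⟩, fun s hs hlt => hc s hs hlt⟩
    obtain ⟨s, ⟨hsQ, hgs⟩, hts⟩ := this
    have hτlt : treeTau P s < treeTau P t := tau_lt_tau_of_lt hWF htQ.1 hsQ.1 hts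
    obtain ⟨_, ζ, hζ, hτ⟩ := htQ
    have hζη : ζ ≤ η := by
      rw [← hη] at hζ; exact Order.lt_succ_iff.1 hζ
    have : treeTau P t ≤ g η := hτ ▸ g_mono_le g ρ hmono hζη hηρ
    exact absurd (lt_of_le_of_lt hgs hτlt) this.not_gt
  · rw [derivIter_limit _ hlim]
    ext t
    simp only [mem_empty_iff_false, iff_false]
    intro ht
    have htQ : t ∈ pullSet P g ρ := derivIter_subset _ _ (mem_iInter.1 ht ⟨1, Ordinal.one_lt_of_isSuccLimit hlim⟩)
    obtain ⟨htP, ζ, hζ, hτ⟩ := htQ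
    have hζ1 : ζ + 1 < ρ := hlim.succ_lt hζ
    have := mem_iInter.1 ht ⟨ζ + 1, hζ1⟩
    rw [pullSet_derivIter hWF g ρ hmono hbd hζ1] at this
    have h1 : g (ζ + 1) ≤ g ζ := hτ ▸ this.2
    exact absurd h1 (hmono (by rw [Ordinal.add_one_eq_succ]; exact Order.lt_succ _) hζ1).not_ge

include hWF hmono hbd in
theorem pullSet_wf : IsWFTree (pullSet P g ρ) :=
  ⟨ρ, pullSet_derivIter_rho hWF g ρ hmono hbd⟩

include hWF hmono hbd in
theorem pullSet_rank : treeRank (pullSet P g ρ) = ρ := by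
  refine le_antisymm (csInf_le' (pullSet_derivIter_rho hWF g ρ hmono hbd)) ?_
  refine le_csInf ⟨ρ, pullSet_derivIter_rho hWF g ρ hmono hbd⟩ fun ξ hξ => ?_
  by_contra hc
  push_neg at hc
  obtain ⟨t, htP, hτ⟩ := exists_tau_eq hWF (hbd ξ hc)
  have htQ : t ∈ pullSet P g ρ := ⟨htP, ξ, hc, hτ⟩
  have : t ∈ derivIter (pullSet P g ρ) ξ := by
    rw [pullSet_derivIter hWF g ρ hmono hbd hc]
    exact ⟨htQ, hτ ▸ le_rfl⟩
  rw [hξ] at this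
  exact this

include hWF hmono hbd in
theorem pullSet_tau {t : α} (htQ : t ∈ pullSet P g ρ) {ζ : Ordinal.{u}} (hζ : ζ < ρ)
    (hτ : treeTau P t = g ζ) : treeTau (pullSet P g ρ) t = ζ := by
  have hset : {ξ : Ordinal.{u} | t ∈ derivIter (pullSet P g ρ) ξ} = Iic ζ := by
    ext ξ
    simp only [mem_setOf_eq, mem_Iic]
    constructor
    · intro h
      by_contra hc
      push_neg at hc
      rcases lt_or_ge ξ ρ with h1 | h1
      · rw [pullSet_derivIter hWF g ρ hmono hbd h1] at h
        have := hτ ▸ h.2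
        exact absurd this (hmono hc h1).not_ge
      · have := derivIter_anti (pullSet P g ρ) h1 h
        rw [pullSet_derivIter_rho hWF g ρ hmono hbd] at this
        exact this
    · intro h
      have hξρ : ξ < ρ := lt_of_le_of_lt h hζ
      rw [pullSet_derivIter hWF g ρ hmono hbd hξρ]
      exact ⟨htQ, hτ ▸ g_mono_le g ρ hmono h hζ⟩
  rw [treeTau, hset, csSup_Iic]

end LemM

/-- helper for `Nat.sInf`. -/
theorem natInf_eq {S : Set ℕ} {m : ℕ} (hm : m ∈ S) (hlt : ∀ k < m, k ∉ S) : sInf S = m :=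
  le_antisymm (Nat.sInf_le hm) (by
    by_contra hc
    push_neg at hc
    exact hlt _ hc (Nat.sInf_mem ⟨m, hm⟩))

theorem alpProd_congr' {ε₁ ε₂ : ℕ → Ordinal.{u}} :
    ∀ n, (∀ i ≤ n, ε₁ i = ε₂ i) → alpProd ε₁ n = alpProd ε₂ n
  | 0, h => by rw [alpProd, alpProd, h 0 le_rfl]
  | (n+1), h => by
    rw [alpProd, alpProd, alpProd_congr' n (fun i hi => h i (by omega)), h (n+1) le_rfl]

/-- digit uniqueness: `c·δ + u = c·δ' + u'` with `u, u' < c` forces equality. -/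
theorem digit_eq {c δ δ' u u' : Ordinal.{u}} (hc : c ≠ 0) (hu : u < c) (hu' : u' < c)
    (h : c * δ + u = c * δ' + u') : δ = δ' ∧ u = u' := by
  have hq : δ = δ' := by
    have h1 : (c * δ + u) / c = δ := by
      rw [Ordinal.mul_add_div _ hc, Ordinal.div_eq_zero_of_lt hu, add_zero]
    have h2 : (c * δ' + u') / c = δ' := by
      rw [Ordinal.mul_add_div _ hc, Ordinal.div_eq_zero_of_lt hu', add_zero]
    rw [← h1, h, h2]
  subst hq
  exact ⟨rfl, add_left_cancel h⟩

theorem mu_pos (x : Ordinal.{u}) : (0:Ordinal.{u}) < omega0 ^ x :=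
  Ordinal.opow_pos x omega0_pos

theorem alpProd_ne_zero (ε : ℕ → Ordinal.{u}) : ∀ i, alpProd ε i ≠ 0
  | 0 => (mu_pos _).ne'
  | (i+1) => mul_ne_zero (alpProd_ne_zero ε i) (mu_pos _).ne'

/-- segment factorization. -/
theorem alpProd_seg (ε : ℕ → Ordinal.{u}) {i j : ℕ} (h : i ≤ j) :
    ∃ c : Ordinal.{u}, c ≠ 0 ∧ alpProd ε j = alpProd ε i * c := by
  induction j with
  | zero =>
    have : i = 0 := Nat.le_zero.1 h
    subst this
    exact ⟨1, one_ne_zero, (mul_one _).symm⟩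
  | succ j ih =>
    rcases Nat.eq_or_lt_of_le h with rfl | h'
    · exact ⟨1, one_ne_zero, (mul_one _).symm⟩
    · obtain ⟨c, hc, hfac⟩ := ih (Nat.lt_succ_iff.1 h')
      exact ⟨c * omega0 ^ omega0 ^ ε (j+1), mul_ne_zero hc (mu_pos _).ne',
        by rw [alpProd, hfac, mul_assoc]⟩

theorem alpProd_mono (ε : ℕ → Ordinal.{u}) {i j : ℕ} (h : i ≤ j) :
    alpProd ε i ≤ alpProd ε j := by
  obtain ⟨c, hc, hfac⟩ := alpProd_seg ε h
  rw [hfac]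
  calc alpProd ε i = alpProd ε i * 1 := (mul_one _).symm
    _ ≤ alpProd ε i * c := mul_le_mul_right (Ordinal.one_le_iff_ne_zero.2 hc) _

noncomputable def prevProd (ε : ℕ → Ordinal.{u}) : ℕ → Ordinal.{u}
  | 0 => 1
  | (i+1) => alpProd ε i

theorem prevProd_ne_zero (ε : ℕ → Ordinal.{u}) : ∀ n, prevProd ε n ≠ 0
  | 0 => one_ne_zero
  | (n+1) => alpProd_ne_zero ε n

theorem alpProd_eq_prevProd (ε : ℕ → Ordinal.{u}) :
    ∀ n, alpProd ε n = prevProd ε n * omega0 ^ omega0 ^ ε n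
  | 0 => by rw [prevProd, one_mul]; rfl
  | (n+1) => rfl

theorem prevProd_seg (ε : ℕ → Ordinal.{u}) {i n : ℕ} (h : i < n) :
    ∃ c : Ordinal.{u}, c ≠ 0 ∧ prevProd ε n = alpProd ε i * c := by
  obtain ⟨m, rfl⟩ := Nat.exists_eq_add_of_lt h
  exact alpProd_seg ε (by omega)

theorem alpProd_le_prevProd (ε : ℕ → Ordinal.{u}) {i n : ℕ} (h : i < n) :
    alpProd ε i ≤ prevProd ε n := by
  obtain ⟨c, hc, hfac⟩ := prevProd_seg ε h
  rw [hfac]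
  calc alpProd ε i = alpProd ε i * 1 := (mul_one _).symm
    _ ≤ alpProd ε i * c := mul_le_mul_right (Ordinal.one_le_iff_ne_zero.2 hc) _

/-- the embedding `G`. -/
noncomputable def G (ε : ℕ → Ordinal.{u}) (a : ℕ → ℕ) : ℕ → Ordinal.{u} → Ordinal.{u}
  | 0 => fun ζ => prevProd ε (a 0) * ζ
  | (q+1) => fun ζ => prevProd ε (a (q+1)) * (ζ / alpProd (fun i => ε (a i)) q)
      + G ε a q (ζ % alpProd (fun i => ε (a i)) q)

section Gfacts
variable (ε : ℕ → Ordinal.{u}) (a : ℕ → ℕ)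

/-- P2: the bound. -/
theorem G_lt (hinc : ∀ j, a j < a (j+1)) :
    ∀ q ζ, ζ < alpProd (fun i => ε (a i)) q → G ε a q ζ < alpProd ε (a q) := by
  intro q
  induction q with
  | zero =>
    intro ζ hζ
    rw [G, alpProd_eq_prevProd ε (a 0)]
    have : (ζ : Ordinal.{u}) < omega0 ^ omega0 ^ ε (a 0) := hζ
    exact mul_lt_mul_of_pos_left this (pos_iff_ne_zero.2 (prevProd_ne_zero ε (a 0)))
  | succ q ih =>
    intro ζ hζ
    rw [G]
    set B' := alpProd (fun i => ε (a i)) q with hB'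
    have hB'ne : B' ≠ 0 := alpProd_ne_zero _ q
    have hGr : G ε a q (ζ % B') < prevProd ε (a (q+1)) :=
      lt_of_lt_of_le (ih _ (Ordinal.mod_lt ζ hB'ne)) (alpProd_le_prevProd ε (hinc q))
    have hδ : ζ / B' < omega0 ^ omega0 ^ ε (a (q+1)) := by
      rw [Ordinal.div_lt hB'ne]
      have : alpProd (fun i => ε (a i)) (q+1) = B' * omega0 ^ omega0 ^ ε (a (q+1)) := rfl
      rw [← this]
      exact hζ
    calc prevProd ε (a (q+1)) * (ζ / B') + G ε a q (ζ % B')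
        < prevProd ε (a (q+1)) * (ζ / B') + prevProd ε (a (q+1)) :=
          add_lt_add_right hGr _
      _ = prevProd ε (a (q+1)) * (ζ / B' + 1) := by
          rw [mul_add, mul_one]
      _ ≤ prevProd ε (a (q+1)) * omega0 ^ omega0 ^ ε (a (q+1)) := by
          refine mul_le_mul_right ?_ _
          rw [Ordinal.add_one_eq_succ]
          exact Order.succ_le_of_lt hδ
      _ = alpProd ε (a (q+1)) := (alpProd_eq_prevProd ε (a (q+1))).symm

/-- P1: strict monotonicity. -/
theorem G_strictMono (hinc : ∀ j, a j < a (j+1)) :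
    ∀ q ζ ζ', ζ < ζ' → ζ' < alpProd (fun i => ε (a i)) q → G ε a q ζ < G ε a q ζ' := by
  intro q
  induction q with
  | zero =>
    intro ζ ζ' h h'
    exact mul_lt_mul_of_pos_left h (pos_iff_ne_zero.2 (prevProd_ne_zero ε (a 0)))
  | succ q ih =>
    intro ζ ζ' h h'
    show prevProd ε (a (q+1)) * (ζ / alpProd (fun i => ε (a i)) q)
      + G ε a q (ζ % alpProd (fun i => ε (a i)) q)
      < prevProd ε (a (q+1)) * (ζ' / alpProd (fun i => ε (a i)) q)
      + G ε a q (ζ' % alpProd (fun i => ε (a i)) q)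
    set B' := alpProd (fun i => ε (a i)) q with hB'
    have hB'ne : B' ≠ 0 := alpProd_ne_zero _ q
    have hdiv : ζ / B' ≤ ζ' / B' := Ordinal.div_le_left h.le B'
    rcases eq_or_lt_of_le hdiv with heq | hlt
    · -- same quotient, compare remainders
      have hmod : ζ % B' < ζ' % B' := by
        have h1 := Ordinal.div_add_mod ζ B'
        have h2 := Ordinal.div_add_mod ζ' B'
        by_contra hc
        push_neg at hc
        have : ζ' ≤ ζ := by
          calc ζ' = B' * (ζ' / B') + ζ' % B' := h2.symm
            _ ≤ B' * (ζ' / B') + ζ % B' := add_le_add_right hc _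
            _ = B' * (ζ / B') + ζ % B' := by rw [heq]
            _ = ζ := h1
        exact absurd h this.not_gt
      rw [heq]
      refine add_lt_add_right ?_ _
      exact ih _ _ hmod (Ordinal.mod_lt ζ' hB'ne)
    · -- strictly smaller quotient
      have hGr : G ε a q (ζ % B') < prevProd ε (a (q+1)) :=
        lt_of_lt_of_le (G_lt ε a hinc q _ (Ordinal.mod_lt ζ hB'ne))
          (alpProd_le_prevProd ε (hinc q))
      calc prevProd ε (a (q+1)) * (ζ / B') + G ε a q (ζ % B')
          < prevProd ε (a (q+1)) * (ζ / B') + prevProd ε (a (q+1)) := add_lt_add_right hGr _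
        _ = prevProd ε (a (q+1)) * (ζ / B' + 1) := by rw [mul_add, mul_one]
        _ ≤ prevProd ε (a (q+1)) * (ζ' / B') := by
            refine mul_le_mul_right ?_ _
            rw [Ordinal.add_one_eq_succ]
            exact Order.succ_le_of_lt hlt
        _ ≤ prevProd ε (a (q+1)) * (ζ' / B') + G ε a q (ζ' % B') := le_self_add

end Gfacts

section ClaimK
variable (ε : ℕ → Ordinal.{u})

theorem block_div {i n : ℕ} (c : Ordinal.{u}) (hfac : prevProd ε n = alpProd ε i * c)
    (δ x : Ordinal.{u}) :
    (prevProd ε n * δ + x) / alpProd ε i = c * δ + x / alpProd ε i := by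
  rw [hfac, mul_assoc, Ordinal.mul_add_div _ (alpProd_ne_zero ε i)]

theorem block_eq {i n : ℕ} (hin : i < n) {δ δ' x x' : Ordinal.{u}}
    (hx : x < prevProd ε n) (hx' : x' < prevProd ε n) :
    (prevProd ε n * δ + x) / alpProd ε i = (prevProd ε n * δ' + x') / alpProd ε i ↔
      (δ = δ' ∧ x / alpProd ε i = x' / alpProd ε i) := by
  obtain ⟨c, hc, hfac⟩ := prevProd_seg ε hin
  rw [block_div ε c hfac, block_div ε c hfac]
  constructor
  · intro h
    have hu : x / alpProd ε i < c := by
      rw [Ordinal.div_lt (alpProd_ne_zero ε i), ← hfac]; exact hx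
    have hu' : x' / alpProd ε i < c := by
      rw [Ordinal.div_lt (alpProd_ne_zero ε i), ← hfac]; exact hx'
    exact digit_eq hc hu hu' h
  · rintro ⟨rfl, h⟩; rw [h]

theorem claimK (a : ℕ → ℕ) (hinc : ∀ j, a j < a (j+1)) :
    ∀ q ζ ζ', ζ < alpProd (fun i => ε (a i)) q → ζ' < alpProd (fun i => ε (a i)) q → ζ ≠ ζ' →
    sInf {i : ℕ | G ε a q ζ / alpProd ε i = G ε a q ζ' / alpProd ε i}
      = a (sInf {j : ℕ | ζ / alpProd (fun i => ε (a i)) j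
          = ζ' / alpProd (fun i => ε (a i)) j}) := by
  have hamono : StrictMono a := strictMono_nat_of_lt_succ hinc
  intro q
  induction q with
  | zero =>
    intro ζ ζ' hζ hζ' hne
    have hT : sInf {j : ℕ | ζ / alpProd (fun i => ε (a i)) j
        = ζ' / alpProd (fun i => ε (a i)) j} = 0 := by
      refine natInf_eq ?_ (by omega)
      show ζ / alpProd (fun i => ε (a i)) 0 = ζ' / alpProd (fun i => ε (a i)) 0
      rw [Ordinal.div_eq_zero_of_lt hζ, Ordinal.div_eq_zero_of_lt hζ']
    rw [hT]
    refine natInf_eq ?_ ?_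
    · show G ε a 0 ζ / alpProd ε (a 0) = G ε a 0 ζ' / alpProd ε (a 0)
      have h1 : G ε a 0 ζ < alpProd ε (a 0) := G_lt ε a hinc 0 ζ hζ
      have h2 : G ε a 0 ζ' < alpProd ε (a 0) := G_lt ε a hinc 0 ζ' hζ'
      rw [Ordinal.div_eq_zero_of_lt h1, Ordinal.div_eq_zero_of_lt h2]
    · intro k hk hkS
      obtain ⟨c, hc, hfac⟩ := prevProd_seg ε hk
      have hform : ∀ x : Ordinal.{u}, G ε a 0 x = prevProd ε (a 0) * x + 0 := by
        intro x; rw [add_zero]; rfl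
      have : (prevProd ε (a 0) * ζ + 0) / alpProd ε k
          = (prevProd ε (a 0) * ζ' + 0) / alpProd ε k := by
        rw [← hform, ← hform]; exact hkS
      rw [block_div ε c hfac, block_div ε c hfac, Ordinal.zero_div, add_zero, add_zero] at this
      apply hne
      rw [← Ordinal.mul_div_cancel ζ hc, ← Ordinal.mul_div_cancel ζ' hc, this]
  | succ q ih =>
    intro ζ ζ' hζ hζ' hne
    set B' : Ordinal.{u} := alpProd (fun i => ε (a i)) q with hB'
    have hB'ne : B' ≠ 0 := alpProd_ne_zero _ q
    have hB'prev : prevProd (fun i => ε (a i)) (q+1) = B' := rfl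
    set δ : Ordinal.{u} := ζ / B' with hδdef
    set r : Ordinal.{u} := ζ % B' with hrdef
    set δ' : Ordinal.{u} := ζ' / B' with hδ'def
    set r' : Ordinal.{u} := ζ' % B' with hr'def
    have hζeq : ζ = B' * δ + r := (Ordinal.div_add_mod ζ B').symm
    have hζ'eq : ζ' = B' * δ' + r' := (Ordinal.div_add_mod ζ' B').symm
    have hr : r < B' := Ordinal.mod_lt ζ hB'ne
    have hr' : r' < B' := Ordinal.mod_lt ζ' hB'ne
    have hGval : G ε a (q+1) ζ = prevProd ε (a (q+1)) * δ + G ε a q r := rfl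
    have hGval' : G ε a (q+1) ζ' = prevProd ε (a (q+1)) * δ' + G ε a q r' := rfl
    have hGr : G ε a q r < prevProd ε (a (q+1)) :=
      lt_of_lt_of_le (G_lt ε a hinc q _ hr) (alpProd_le_prevProd ε (hinc q))
    have hGr' : G ε a q r' < prevProd ε (a (q+1)) :=
      lt_of_lt_of_le (G_lt ε a hinc q _ hr') (alpProd_le_prevProd ε (hinc q))
    -- characterization of LHS membership for small i
    have hLchar : ∀ i < a (q+1),
        (G ε a (q+1) ζ / alpProd ε i = G ε a (q+1) ζ' / alpProd ε i ↔
          (δ = δ' ∧ G ε a q r / alpProd ε i = G ε a q r' / alpProd ε i)) := by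
      intro i hi
      rw [hGval, hGval']
      exact block_eq ε hi hGr hGr'
    -- characterization of RHS membership for small j
    have hRchar : ∀ j < q + 1,
        (ζ / alpProd (fun i => ε (a i)) j = ζ' / alpProd (fun i => ε (a i)) j ↔
          (δ = δ' ∧ r / alpProd (fun i => ε (a i)) j = r' / alpProd (fun i => ε (a i)) j)) := by
      intro j hj
      have h1 : ζ = prevProd (fun i => ε (a i)) (q+1) * δ + r := by rw [hB'prev]; exact hζeq
      have h2 : ζ' = prevProd (fun i => ε (a i)) (q+1) * δ' + r' := by rw [hB'prev]; exact hζ'eq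
      rw [h1, h2]
      exact block_eq (fun i => ε (a i)) hj (hB'prev ▸ hr) (hB'prev ▸ hr')
    by_cases hδδ : δ = δ'
    · -- same block: reduce to IH
      have hrr' : r ≠ r' := by
        intro h
        apply hne
        rw [hζeq, hζ'eq, hδδ, h]
      have hIH := ih r r' hr hr' hrr'
      set j₀ : ℕ := sInf {j : ℕ | r / alpProd (fun i => ε (a i)) j
          = r' / alpProd (fun i => ε (a i)) j} with hj₀def
      have hq_mem : q ∈ {j : ℕ | r / alpProd (fun i => ε (a i)) j
          = r' / alpProd (fun i => ε (a i)) j} := by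
        show r / B' = r' / B'
        rw [Ordinal.div_eq_zero_of_lt hr, Ordinal.div_eq_zero_of_lt hr']
      have hj₀mem : r / alpProd (fun i => ε (a i)) j₀ = r' / alpProd (fun i => ε (a i)) j₀ :=
        Nat.sInf_mem ⟨q, hq_mem⟩
      have hj₀q : j₀ ≤ q := Nat.sInf_le hq_mem
      -- RHS computation
      have hT : sInf {j : ℕ | ζ / alpProd (fun i => ε (a i)) j
          = ζ' / alpProd (fun i => ε (a i)) j} = j₀ := by
        refine natInf_eq ?_ ?_
        · show ζ / alpProd (fun i => ε (a i)) j₀ = ζ' / alpProd (fun i => ε (a i)) j₀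
          exact (hRchar j₀ (by omega)).2 ⟨hδδ, hj₀mem⟩
        · intro k hk hkT
          have := (hRchar k (by omega)).1 hkT
          exact Nat.notMem_of_lt_sInf (hj₀def ▸ hk) this.2
      rw [hT]
      -- LHS computation
      have haj₀mem : G ε a q r / alpProd ε (a j₀) = G ε a q r' / alpProd ε (a j₀) := by
        have hSne : {i : ℕ | G ε a q r / alpProd ε i = G ε a q r' / alpProd ε i}.Nonempty := by
          refine ⟨a q, ?_⟩
          show G ε a q r / alpProd ε (a q) = G ε a q r' / alpProd ε (a q)
          rw [Ordinal.div_eq_zero_of_lt (G_lt ε a hinc q _ hr),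
            Ordinal.div_eq_zero_of_lt (G_lt ε a hinc q _ hr')]
        have := Nat.sInf_mem hSne
        rwa [hIH] at this
      refine natInf_eq ?_ ?_
      · show G ε a (q+1) ζ / alpProd ε (a j₀) = G ε a (q+1) ζ' / alpProd ε (a j₀)
        refine (hLchar (a j₀) ?_).2 ⟨hδδ, haj₀mem⟩
        exact hamono (by omega)
      · intro k hk hkS
        have hk2 : k < a (q+1) := lt_trans hk (hamono (by omega))
        have := (hLchar k hk2).1 hkS
        have hklt : k < sInf {i : ℕ | G ε a q r / alpProd ε i = G ε a q r' / alpProd ε i} := by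
          rw [hIH]; exact hk
        exact Nat.notMem_of_lt_sInf hklt this.2
    · -- different blocks
      have hT : sInf {j : ℕ | ζ / alpProd (fun i => ε (a i)) j
          = ζ' / alpProd (fun i => ε (a i)) j} = q + 1 := by
        refine natInf_eq ?_ ?_
        · show ζ / alpProd (fun i => ε (a i)) (q+1) = ζ' / alpProd (fun i => ε (a i)) (q+1)
          rw [Ordinal.div_eq_zero_of_lt hζ, Ordinal.div_eq_zero_of_lt hζ']
        · intro k hk hkT
          exact hδδ ((hRchar k hk).1 hkT).1
      rw [hT]
      refine natInf_eq ?_ ?_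
      · show G ε a (q+1) ζ / alpProd ε (a (q+1)) = G ε a (q+1) ζ' / alpProd ε (a (q+1))
        rw [Ordinal.div_eq_zero_of_lt (G_lt ε a hinc (q+1) ζ hζ),
          Ordinal.div_eq_zero_of_lt (G_lt ε a hinc (q+1) ζ' hζ')]
      · intro k hk hkS
        exact hδδ ((hLchar k hk).1 hkS).1

end ClaimK

section Assemble
variable {α : Type u} [PartialOrder α]

theorem div_eq_iff_between {b x δ : Ordinal.{u}} (hb : b ≠ 0) :
    x / b = δ ↔ (b * δ ≤ x ∧ x < b * (δ + 1)) := by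
  constructor
  · rintro rfl
    refine ⟨Ordinal.mul_div_le x b, ?_⟩
    rw [← Ordinal.div_lt hb]
    exact lt_of_lt_of_le (by rw [Ordinal.add_one_eq_succ]; exact Order.lt_succ _) le_rfl
  · rintro ⟨h1, h2⟩
    have hle : δ ≤ x / b := (Ordinal.le_div hb).2 h1
    have hlt : x / b < δ + 1 := (Ordinal.div_lt hb).2 h2
    rw [Ordinal.add_one_eq_succ] at hlt
    exact le_antisymm (Order.lt_succ_iff.1 hlt) hle

/-- bridge: the separation set equals the common-quotient set. -/
theorem sep_set_eq {P : Set α} (hWF : IsWFTree P) (ε : ℕ → Ordinal.{u}) {s t : α}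
    (hs : s ∈ P) (ht : t ∈ P) :
    {i : ℕ | ∃ δ : Ordinal.{u},
      s ∈ derivIter P (alpProd ε i * δ) \ derivIter P (alpProd ε i * (δ + 1)) ∧
      t ∈ derivIter P (alpProd ε i * δ) \ derivIter P (alpProd ε i * (δ + 1))} =
    {i : ℕ | treeTau P s / alpProd ε i = treeTau P t / alpProd ε i} := by
  ext i
  have hne : alpProd ε i ≠ 0 := alpProd_ne_zero ε i
  simp only [mem_setOf_eq, mem_diff]
  constructor
  · rintro ⟨δ, ⟨hs1, hs2⟩, ⟨ht1, ht2⟩⟩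
    have hsτ : treeTau P s / alpProd ε i = δ := by
      rw [div_eq_iff_between hne]
      refine ⟨(mem_derivIter_iff_le_tau hWF hs).1 hs1, ?_⟩
      by_contra hc
      push_neg at hc
      exact hs2 ((mem_derivIter_iff_le_tau hWF hs).2 hc)
    have htτ : treeTau P t / alpProd ε i = δ := by
      rw [div_eq_iff_between hne]
      refine ⟨(mem_derivIter_iff_le_tau hWF ht).1 ht1, ?_⟩
      by_contra hc
      push_neg at hc
      exact ht2 ((mem_derivIter_iff_le_tau hWF ht).2 hc)
    rw [hsτ, htτ]
  · intro h
    refine ⟨treeTau P s / alpProd ε i, ⟨?_, ?_⟩, ⟨?_, ?_⟩⟩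
    · exact (mem_derivIter_iff_le_tau hWF hs).2 (Ordinal.mul_div_le _ _)
    · intro hmem
      have := (mem_derivIter_iff_le_tau hWF hs).1 hmem
      have h2 : treeTau P s < alpProd ε i * (treeTau P s / alpProd ε i + 1) :=
        ((div_eq_iff_between hne).1 rfl).2
      exact absurd this h2.not_ge
    · refine (mem_derivIter_iff_le_tau hWF ht).2 ?_
      rw [h]
      exact Ordinal.mul_div_le _ _
    · intro hmem
      have := (mem_derivIter_iff_le_tau hWF ht).1 hmem
      have h2 : treeTau P t < alpProd ε i * (treeTau P t / alpProd ε i + 1) :=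
        ((div_eq_iff_between hne).1 rfl).2
      rw [← h] at h2
      exact absurd this h2.not_ge

theorem natInf_congr {S T : Set ℕ} {m : ℕ} (hST : ∀ k ≤ m, (k ∈ S ↔ k ∈ T))
    (hmS : m ∈ S) : sInf S = sInf T := by
  have hmT : m ∈ T := (hST m le_rfl).1 hmS
  have h1 : sInf S ≤ m := Nat.sInf_le hmS
  have h2 : sInf T ≤ m := Nat.sInf_le hmT
  have hS : sInf S ∈ S := Nat.sInf_mem ⟨m, hmS⟩
  have hT : sInf T ∈ T := Nat.sInf_mem ⟨m, hmT⟩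
  refine le_antisymm (Nat.sInf_le ((hST _ h2).2 hT)) (Nat.sInf_le ((hST _ h1).1 hS))

end Assemble

end S17

/-- every tree `P` whose rank is an additively indecomposable
ordinal `γ` admits an `A`-contraction for every `A ⊆ λ(γ)`: a rank-one subtree when
`A = ∅`, and, when `γ = ω^{ω^{ε_0}}⋯ω^{ω^{ε_l}}` and `A = {a(0) < … < a(q)} ⊆
{0,…,l}`, a subtree `Q` with `rank(Q) = ω^{ω^{ε_{a(0)}}}⋯ω^{ω^{ε_{a(q)}}}` and
`ς_P(s,t) = a(ς_Q(s,t))` for all pairs of `Q`. -/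
theorem statement17 {α : Type u} [PartialOrder α] (γ : Ordinal.{u})
    (hγ : ∃ ξ : Ordinal.{u}, γ = omega0 ^ ξ) (P : Set α) (hP : IsTree P)
    (hWF : IsWFTree P) (hrank : treeRank P = γ) :
    (∃ Q ⊆ P, treeRank Q = 1) ∧
    (∀ (l : ℕ) (ε : ℕ → Ordinal.{u}), (∀ i < l, ε (i + 1) ≤ ε i) →
      γ = alpProd ε l →
      ∀ (q : ℕ) (a : ℕ → ℕ), (∀ i < q, a i < a (i + 1)) → a q ≤ l →
        ∃ Q ⊆ P, treeRank Q = alpProd (fun i => ε (a i)) q ∧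
          ∀ s ∈ Q, ∀ t ∈ Q, s < t →
            sep P ε s t = a (sep Q (fun i => ε (a i)) s t)) := by
  constructor
  · -- the ∅-contraction: a singleton subtree
    have hγ0 : γ ≠ 0 := by
      obtain ⟨ξ, rfl⟩ := hγ
      exact Ordinal.opow_ne_zero ξ omega0_ne_zero
    have hPne : P.Nonempty := by
      by_contra hc
      rw [not_nonempty_iff_eq_empty] at hc
      have h0 : derivIter P 0 = ∅ := by rw [S17.derivIter_zero, hc]
      have : treeRank P = 0 := le_antisymm (csInf_le' h0) (zero_le ..)
      rw [hrank] at this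
      exact hγ0 this
    obtain ⟨x, hx⟩ := hPne
    refine ⟨{x}, singleton_subset_iff.2 hx, ?_⟩
    have h1 : derivIter ({x} : Set α) 1 = ∅ := by
      rw [show (1 : Ordinal.{u}) = 0 + 1 by simp, S17.derivIter_succ, S17.derivIter_zero]
      ext y
      constructor
      · rintro ⟨hy, hnl⟩
        rw [mem_singleton_iff] at hy
        subst hy
        exact absurd ⟨rfl, fun s hs hlt => by
          rw [mem_singleton_iff] at hs; subst hs; exact lt_irrefl _ hlt⟩ hnl
      · intro h
        exact absurd h (notMem_empty y)
    refine le_antisymm (csInf_le' h1) (le_csInf ⟨1, h1⟩ fun ξ hξ => ?_)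
    rw [Ordinal.one_le_iff_ne_zero]
    rintro rfl
    rw [mem_setOf_eq, S17.derivIter_zero] at hξ
    exact absurd hξ (singleton_ne_empty x)
  · intro l ε hdec hγeq q a hainc haq
    -- extend `a` to a globally strictly increasing function
    set a' : ℕ → ℕ := fun j => if j ≤ q then a j else a q + (j - q) with ha'def
    have ha'eq : ∀ j ≤ q, a' j = a j := fun j hj => if_pos hj
    have hinc' : ∀ j, a' j < a' (j + 1) := by
      intro j
      by_cases h1 : j + 1 ≤ q
      · rw [ha'eq j (by omega), ha'eq (j+1) h1]
        exact hainc j (by omega)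
      · by_cases h2 : j ≤ q
        · have hjq : j = q := by omega
          subst hjq
          rw [ha'eq j le_rfl, ha'def]
          simp only [if_neg h1]
          omega
        · rw [ha'def]
          simp only [if_neg h1, if_neg h2]
          omega
    have hcongr : ∀ j ≤ q, alpProd (fun i => ε (a' i)) j = alpProd (fun i => ε (a i)) j := by
      intro j hj
      refine S17.alpProd_congr' j fun i hi => ?_
      rw [ha'eq i (le_trans hi hj)]
    set ρ : Ordinal.{u} := alpProd (fun i => ε (a i)) q with hρdef
    have hρ' : alpProd (fun i => ε (a' i)) q = ρ := hcongr q le_rfl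
    set g : Ordinal.{u} → Ordinal.{u} := S17.G ε a' q with hgdef
    have hmono : ∀ {ζ ζ' : Ordinal.{u}}, ζ < ζ' → ζ' < ρ → g ζ < g ζ' := by
      intro ζ ζ' h h'
      exact S17.G_strictMono ε a' hinc' q ζ ζ' h (by rw [hρ']; exact h')
    have hbd : ∀ ζ, ζ < ρ → g ζ < treeRank P := by
      intro ζ hζ
      have h1 : g ζ < alpProd ε (a' q) :=
        S17.G_lt ε a' hinc' q ζ (by rw [hρ']; exact hζ)
      rw [ha'eq q le_rfl] at h1
      calc g ζ < alpProd ε (a q) := h1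
        _ ≤ alpProd ε l := S17.alpProd_mono ε haq
        _ = treeRank P := by rw [← hγeq, hrank]
    have hQwf : IsWFTree (S17.pullSet P g ρ) := S17.pullSet_wf hWF g ρ hmono hbd
    refine ⟨S17.pullSet P g ρ, S17.pullSet_subset g ρ, ?_, ?_⟩
    · exact S17.pullSet_rank hWF g ρ hmono hbd
    · intro s hs t ht hst
      obtain ⟨hsP, ζs, hζsρ, hτs⟩ := hs
      obtain ⟨htP, ζt, hζtρ, hτt⟩ := ht
      have hsQ : s ∈ S17.pullSet P g ρ := ⟨hsP, ζs, hζsρ, hτs⟩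
      have htQ : t ∈ S17.pullSet P g ρ := ⟨htP, ζt, hζtρ, hτt⟩
      have hτlt : treeTau P t < treeTau P s := S17.tau_lt_tau_of_lt hWF hsP htP hst
      have hζne : ζs ≠ ζt := by
        rintro rfl
        rw [hτs, hτt] at hτlt
        exact lt_irrefl _ hτlt
      have hτQs : treeTau (S17.pullSet P g ρ) s = ζs := S17.pullSet_tau hWF g ρ hmono hbd hsQ hζsρ hτs
      have hτQt : treeTau (S17.pullSet P g ρ) t = ζt := S17.pullSet_tau hWF g ρ hmono hbd htQ hζtρ hτt
      -- rewrite both separation functions via the quotient sets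
      have hsepP : sep P ε s t = sInf {i : ℕ | treeTau P s / alpProd ε i = treeTau P t / alpProd ε i} := by
        rw [sep, S17.sep_set_eq hWF ε hsP htP]
      have hsepQ : sep (S17.pullSet P g ρ) (fun i => ε (a i)) s t
          = sInf {j : ℕ | ζs / alpProd (fun i => ε (a i)) j = ζt / alpProd (fun i => ε (a i)) j} := by
        rw [sep, S17.sep_set_eq hQwf (fun i => ε (a i)) hsQ htQ, hτQs, hτQt]
      rw [hsepP, hsepQ]
      -- apply the combinatorial claim
      have hK := S17.claimK ε a' hinc' q ζs ζt (by rw [hρ']; exact hζsρ) (by rw [hρ']; exact hζtρ) hζne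
      rw [hτs, hτt, hgdef, hK]
      -- translate between `a'` and `a`
      have hqmem : q ∈ {j : ℕ | ζs / alpProd (fun i => ε (a' i)) j
          = ζt / alpProd (fun i => ε (a' i)) j} := by
        show ζs / alpProd (fun i => ε (a' i)) q = ζt / alpProd (fun i => ε (a' i)) q
        rw [hρ', Ordinal.div_eq_zero_of_lt hζsρ, Ordinal.div_eq_zero_of_lt hζtρ]
      have hsets : sInf {j : ℕ | ζs / alpProd (fun i => ε (a' i)) j
            = ζt / alpProd (fun i => ε (a' i)) j}
          = sInf {j : ℕ | ζs / alpProd (fun i => ε (a i)) j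
            = ζt / alpProd (fun i => ε (a i)) j} := by
        refine S17.natInf_congr (fun k hk => ?_) hqmem
        simp only [mem_setOf_eq, hcongr k hk]
      rw [← hsets]
      have hj₀q : sInf {j : ℕ | ζs / alpProd (fun i => ε (a' i)) j
          = ζt / alpProd (fun i => ε (a' i)) j} ≤ q := Nat.sInf_le hqmem
      exact ha'eq _ hj₀q
end
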